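/- arXiv:math/0307233 — 2 statements merged into one kernel-verified Lean document; each statement's English description precedes it below -/
import Mathlib

section
/- Let F(X) be a free group freely generated by a set X, let Y = {gxg^{−1} : g ∈ F(X), x ∈ X}, let F⁺(Y) be the free monoid freely generated by Y, and let ν: F⁺(Y) → ℤ[F(X)] be the monoid homomorphism into the multiplicative monoid of the group ring ℤ[F(X)] defined by ν(y) = y − 1 for all y ∈ Y. Then ν is injective. -/
/-! Common definitions: surface braid groups, singular braid monoids, graph monoids. -/

/-- `prodAsc f i j = f i * f (i+1) * ⋯ * f j` (equal to `1` when `j < i`). -/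
def prodAsc {M : Type*} [Monoid M] (f : ℕ → M) (i j : ℕ) : M :=
  ((List.range' i (j + 1 - i)).map f).prod

/-- `prodDesc f i j = f i * f (i-1) * ⋯ * f j` (equal to `1` when `i < j`). -/
def prodDesc {M : Type*} [Monoid M] (f : ℕ → M) (i j : ℕ) : M :=
  (((List.range' j (i + 1 - j)).map f).reverse).prod

/-- Generators of the braid group `B_n(M)` of a closed oriented surface of genus `g`:
`σ_1, …, σ_{n-1}` and `a_1, …, a_{2g}` (`s ⟨i-1, _⟩` encodes `σ_i`, `a ⟨k-1, _⟩` encodes `a_k`). -/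
inductive BGen (n g : ℕ) : Type
  | s : Fin (n - 1) → BGen n g
  | a : Fin (2 * g) → BGen n g

/-- The word `σ_i` (1-based index) in the free group. -/
def bS (n g : ℕ) (i : ℕ) : FreeGroup (BGen n g) :=
  if h : i - 1 < n - 1 then FreeGroup.of (BGen.s ⟨i - 1, h⟩) else 1

/-- The word `a_k` (1-based index) in the free group. -/
def bA (n g : ℕ) (k : ℕ) : FreeGroup (BGen n g) :=
  if h : k - 1 < 2 * g then FreeGroup.of (BGen.a ⟨k - 1, h⟩) else 1

/-- The word `A_{2r} = σ_1⁻¹ (a_1 ⋯ a_{r-1} a_{r+1}⁻¹ ⋯ a_{2g}⁻¹) σ_1⁻¹`. -/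
def bA2 (n g : ℕ) (r : ℕ) : FreeGroup (BGen n g) :=
  (bS n g 1)⁻¹ * prodAsc (bA n g) 1 (r - 1) *
    prodAsc (fun k => (bA n g k)⁻¹) (r + 1) (2 * g) * (bS n g 1)⁻¹

/-- The relators (R1)–(R6) of the braid group of a closed oriented surface of genus `g`. -/
def Brel (n g : ℕ) : Set (FreeGroup (BGen n g)) :=
  { w |
    -- (R1)
    (∃ i j, 1 ≤ i ∧ i ≤ n - 1 ∧ 1 ≤ j ∧ j ≤ n - 1 ∧ (i + 2 ≤ j ∨ j + 2 ≤ i) ∧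
      w = bS n g i * bS n g j * (bS n g j * bS n g i)⁻¹) ∨
    -- (R2)
    (∃ i, 1 ≤ i ∧ i + 1 ≤ n - 1 ∧
      w = bS n g i * bS n g (i + 1) * bS n g i *
        (bS n g (i + 1) * bS n g i * bS n g (i + 1))⁻¹) ∨
    -- (R3)
    (w = prodAsc (bA n g) 1 (2 * g) * prodAsc (fun k => (bA n g k)⁻¹) 1 (2 * g) *
      (prodAsc (bS n g) 1 (n - 2) * (bS n g (n - 1)) ^ 2 * prodDesc (bS n g) (n - 2) 1)⁻¹) ∨
    -- (R4)
    (∃ r s, 1 ≤ r ∧ r ≤ 2 * g ∧ 1 ≤ s ∧ s ≤ 2 * g ∧ r ≠ s ∧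
      w = bA n g r * bA2 n g s * (bA2 n g s * bA n g r)⁻¹) ∨
    -- (R5)
    (∃ r, 1 ≤ r ∧ r ≤ 2 * g ∧
      w = prodAsc (bA n g) 1 r * bA2 n g r *
        ((bS n g 1) ^ 2 * bA2 n g r * prodAsc (bA n g) 1 r)⁻¹) ∨
    -- (R6)
    (∃ r i, 1 ≤ r ∧ r ≤ 2 * g ∧ 2 ≤ i ∧ i ≤ n - 1 ∧
      w = bA n g r * bS n g i * (bS n g i * bA n g r)⁻¹) }

/-- The braid group `B_n(M)` of the closed oriented surface `M` of genus `g`. -/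
abbrev SurfBraidGroup (n g : ℕ) := PresentedGroup (Brel n g)

/-- The canonical projection from the free group onto `B_n(M)`. -/
def bmk (n g : ℕ) : FreeGroup (BGen n g) →* SurfBraidGroup n g := PresentedGroup.mk (Brel n g)

/-- The generator `σ_i` of `B_n(M)` (1-based index). -/
def Bσ (n g : ℕ) (i : ℕ) : SurfBraidGroup n g := bmk n g (bS n g i)

/-- The generator `a_k` of `B_n(M)` (1-based index). -/
def Ba (n g : ℕ) (k : ℕ) : SurfBraidGroup n g := bmk n g (bA n g k)

/-- `T_{i j} = σ_i ⋯ σ_{j-2} σ_{j-1}² σ_{j-2}⁻¹ ⋯ σ_i⁻¹` in `B_n(M)`. -/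
def bT (n g : ℕ) (i j : ℕ) : SurfBraidGroup n g :=
  bmk n g (prodAsc (bS n g) i (j - 2) * (bS n g (j - 1)) ^ 2 * (prodAsc (bS n g) i (j - 2))⁻¹)

/-- The set `Υ = {β σ_i² β⁻¹ : β ∈ B_n(M), 1 ≤ i ≤ n-1}`. -/
def Ups (n g : ℕ) : Set (SurfBraidGroup n g) :=
  { x | ∃ β : SurfBraidGroup n g, ∃ i : ℕ, 1 ≤ i ∧ i ≤ n - 1 ∧ x = β * (Bσ n g i) ^ 2 * β⁻¹ }

/-- The subgroup `K_n(M)` of `B_n(M)` generated by `Υ`. -/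
def Ksub (n g : ℕ) : Subgroup (SurfBraidGroup n g) := Subgroup.closure (Ups n g)

/-- `θ : B_n(M) → Sym_n` is the standard epimorphism: `θ(σ_i) = (i, i+1)` and `θ(a_k) = 1`
(points of `{1, …, n}` are encoded 0-based in `Fin n`). -/
def IsTheta (n g : ℕ) (θ : SurfBraidGroup n g →* Equiv.Perm (Fin n)) : Prop :=
  (∀ i : ℕ, ∀ _h1 : 1 ≤ i, ∀ _h2 : i ≤ n - 1,
    θ (Bσ n g i) = Equiv.swap ⟨i - 1, by omega⟩ ⟨i, by omega⟩) ∧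
  (∀ k : ℕ, 1 ≤ k → k ≤ 2 * g → θ (Ba n g k) = 1)

/-- The set `Υ_{i j} = {β T_{i j} β⁻¹ : β ∈ PB_n(M)}`, where `PB_n(M) = ker θ`. -/
def UpsIJ (n g : ℕ) (θ : SurfBraidGroup n g →* Equiv.Perm (Fin n)) (i j : ℕ) :
    Set (SurfBraidGroup n g) :=
  { x | ∃ β ∈ θ.ker, x = β * bT n g i j * β⁻¹ }

/-! ### Graph monoids -/

/-- The congruence on the free monoid over the vertex set generated by the relations
`xy = yx` for edges `{x, y}` of the graph (edge relation `E`). -/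
def graphCon {X : Type*} (E : X → X → Prop) : Con (FreeMonoid X) :=
  conGen (fun w₁ w₂ => ∃ x y, E x y ∧ w₁ = FreeMonoid.of x * FreeMonoid.of y ∧
    w₂ = FreeMonoid.of y * FreeMonoid.of x)

/-- The graph monoid `M(Γ)` of a graph with vertex set `X` and edge relation `E`. -/
abbrev GraphMonoid {X : Type*} (E : X → X → Prop) := (graphCon E).Quotient

/-- The vertex `x`, viewed as an element of the graph monoid. -/
def gvert {X : Type*} (E : X → X → Prop) (x : X) : GraphMonoid E :=
  (graphCon E).mk' (FreeMonoid.of x)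

/-- The edge relation of the commutation graph on a subset `S` of a monoid:
`{u, v}` is an edge iff `u ≠ v` and `uv = vu`. -/
def commE {G : Type*} [Monoid G] (S : Set G) (u v : ↥S) : Prop :=
  u ≠ v ∧ (u : G) * v = v * u

/-! ### The singular braid monoid -/

/-- Generators of the singular braid monoid: `σ_i^{±1}`, `a_k^{±1}`, `τ_i` (1-based encoding
as in `BGen`). -/
inductive SGen (n g : ℕ) : Type
  | sp : Fin (n - 1) → SGen n g
  | sm : Fin (n - 1) → SGen n g
  | ap : Fin (2 * g) → SGen n g
  | am : Fin (2 * g) → SGen n g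
  | t : Fin (n - 1) → SGen n g

/-- The letter `σ_i`. -/
def mSp (n g : ℕ) (i : ℕ) : FreeMonoid (SGen n g) :=
  if h : i - 1 < n - 1 then FreeMonoid.of (SGen.sp ⟨i - 1, h⟩) else 1

/-- The letter `σ_i⁻¹`. -/
def mSm (n g : ℕ) (i : ℕ) : FreeMonoid (SGen n g) :=
  if h : i - 1 < n - 1 then FreeMonoid.of (SGen.sm ⟨i - 1, h⟩) else 1

/-- The letter `a_k`. -/
def mAp (n g : ℕ) (k : ℕ) : FreeMonoid (SGen n g) :=
  if h : k - 1 < 2 * g then FreeMonoid.of (SGen.ap ⟨k - 1, h⟩) else 1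

/-- The letter `a_k⁻¹`. -/
def mAm (n g : ℕ) (k : ℕ) : FreeMonoid (SGen n g) :=
  if h : k - 1 < 2 * g then FreeMonoid.of (SGen.am ⟨k - 1, h⟩) else 1

/-- The letter `τ_i`. -/
def mT (n g : ℕ) (i : ℕ) : FreeMonoid (SGen n g) :=
  if h : i - 1 < n - 1 then FreeMonoid.of (SGen.t ⟨i - 1, h⟩) else 1

/-- The word `A_{2r}` in the singular braid generators. -/
def mA2 (n g : ℕ) (r : ℕ) : FreeMonoid (SGen n g) :=
  mSm n g 1 * prodAsc (mAp n g) 1 (r - 1) * prodAsc (mAm n g) (r + 1) (2 * g) * mSm n g 1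

/-- The word `a_{i r}`: `(σ_{i-1}⁻¹ ⋯ σ_1⁻¹) a_r (σ_1⁻¹ ⋯ σ_{i-1}⁻¹)` for odd `r`, and
`(σ_{i-1} ⋯ σ_1) a_r (σ_1 ⋯ σ_{i-1})` for even `r`. -/
def mair (n g : ℕ) (i r : ℕ) : FreeMonoid (SGen n g) :=
  if r % 2 = 1 then prodDesc (mSm n g) (i - 1) 1 * mAp n g r * prodAsc (mSm n g) 1 (i - 1)
  else prodDesc (mSp n g) (i - 1) 1 * mAp n g r * prodAsc (mSp n g) 1 (i - 1)

/-- The word representing `a_{i r}⁻¹`. -/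
def mairInv (n g : ℕ) (i r : ℕ) : FreeMonoid (SGen n g) :=
  if r % 2 = 1 then prodDesc (mSp n g) (i - 1) 1 * mAm n g r * prodAsc (mSp n g) 1 (i - 1)
  else prodDesc (mSm n g) (i - 1) 1 * mAm n g r * prodAsc (mSm n g) 1 (i - 1)

/-- The defining relations (R0)–(R12) of the singular braid monoid `SB_n(M)`. -/
def SBrel (n g : ℕ) : FreeMonoid (SGen n g) → FreeMonoid (SGen n g) → Prop := fun w₁ w₂ =>
  -- (R0)
  (∃ i, 1 ≤ i ∧ i ≤ n - 1 ∧
    (w₁ = mSp n g i * mSm n g i ∨ w₁ = mSm n g i * mSp n g i) ∧ w₂ = 1) ∨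
  (∃ k, 1 ≤ k ∧ k ≤ 2 * g ∧
    (w₁ = mAp n g k * mAm n g k ∨ w₁ = mAm n g k * mAp n g k) ∧ w₂ = 1) ∨
  -- (R1)
  (∃ i j, 1 ≤ i ∧ i ≤ n - 1 ∧ 1 ≤ j ∧ j ≤ n - 1 ∧ (i + 2 ≤ j ∨ j + 2 ≤ i) ∧
    w₁ = mSp n g i * mSp n g j ∧ w₂ = mSp n g j * mSp n g i) ∨
  -- (R2)
  (∃ i, 1 ≤ i ∧ i + 1 ≤ n - 1 ∧
    w₁ = mSp n g i * mSp n g (i + 1) * mSp n g i ∧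
    w₂ = mSp n g (i + 1) * mSp n g i * mSp n g (i + 1)) ∨
  -- (R3)
  (w₁ = prodAsc (mAp n g) 1 (2 * g) * prodAsc (mAm n g) 1 (2 * g) ∧
    w₂ = prodAsc (mSp n g) 1 (n - 2) * mSp n g (n - 1) * mSp n g (n - 1) *
      prodDesc (mSp n g) (n - 2) 1) ∨
  -- (R4)
  (∃ r s, 1 ≤ r ∧ r ≤ 2 * g ∧ 1 ≤ s ∧ s ≤ 2 * g ∧ r ≠ s ∧
    w₁ = mAp n g r * mA2 n g s ∧ w₂ = mA2 n g s * mAp n g r) ∨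
  -- (R5)
  (∃ r, 1 ≤ r ∧ r ≤ 2 * g ∧
    w₁ = prodAsc (mAp n g) 1 r * mA2 n g r ∧
    w₂ = mSp n g 1 * mSp n g 1 * mA2 n g r * prodAsc (mAp n g) 1 r) ∨
  -- (R6)
  (∃ r i, 1 ≤ r ∧ r ≤ 2 * g ∧ 2 ≤ i ∧ i ≤ n - 1 ∧
    w₁ = mAp n g r * mSp n g i ∧ w₂ = mSp n g i * mAp n g r) ∨
  -- (R7)
  (∃ i j, 1 ≤ i ∧ i ≤ n - 1 ∧ 1 ≤ j ∧ j ≤ n - 1 ∧ (i + 2 ≤ j ∨ j + 2 ≤ i) ∧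
    w₁ = mSp n g i * mT n g j ∧ w₂ = mT n g j * mSp n g i) ∨
  -- (R8)
  (∃ i j, 1 ≤ i ∧ i ≤ n - 1 ∧ 1 ≤ j ∧ j ≤ n - 1 ∧ (i + 2 ≤ j ∨ j + 2 ≤ i) ∧
    w₁ = mT n g i * mT n g j ∧ w₂ = mT n g j * mT n g i) ∨
  -- (R9)
  (∃ i, 1 ≤ i ∧ i ≤ n - 1 ∧
    w₁ = mSp n g i * mT n g i ∧ w₂ = mT n g i * mSp n g i) ∨
  -- (R10)
  (∃ i j, 1 ≤ i ∧ i ≤ n - 1 ∧ 1 ≤ j ∧ j ≤ n - 1 ∧ (i + 1 = j ∨ j + 1 = i) ∧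
    w₁ = mSp n g i * mSp n g j * mT n g i ∧ w₂ = mT n g j * mSp n g i * mSp n g j) ∨
  -- (R11)
  (∃ i r, 1 ≤ i ∧ i ≤ n - 1 ∧ 1 ≤ r ∧ r ≤ 2 * g ∧
    w₁ = mair n g i r * mair n g (i + 1) r * mT n g i *
      (mairInv n g (i + 1) r * mairInv n g i r) ∧
    w₂ = mT n g i) ∨
  -- (R12)
  (∃ i j r, 1 ≤ i ∧ i ≤ n - 1 ∧ 1 ≤ j ∧ j ≤ n ∧ j ≠ i ∧ j ≠ i + 1 ∧ 1 ≤ r ∧ r ≤ 2 * g ∧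
    w₁ = mT n g i * mair n g j r ∧ w₂ = mair n g j r * mT n g i)

/-- The singular braid monoid `SB_n(M)`. -/
abbrev SingBraidMonoid (n g : ℕ) := (conGen (SBrel n g)).Quotient

/-- The canonical projection from the free monoid onto `SB_n(M)`. -/
def smk (n g : ℕ) : FreeMonoid (SGen n g) →* SingBraidMonoid n g := Con.mk' _

/-- The generator `σ_i` of `SB_n(M)`. -/
def sσ (n g : ℕ) (i : ℕ) : SingBraidMonoid n g := smk n g (mSp n g i)

/-- The generator `σ_i⁻¹` of `SB_n(M)`. -/
def sσi (n g : ℕ) (i : ℕ) : SingBraidMonoid n g := smk n g (mSm n g i)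

/-- The generator `a_k` of `SB_n(M)`. -/
def sa (n g : ℕ) (k : ℕ) : SingBraidMonoid n g := smk n g (mAp n g k)

/-- The generator `a_k⁻¹` of `SB_n(M)`. -/
def sai (n g : ℕ) (k : ℕ) : SingBraidMonoid n g := smk n g (mAm n g k)

/-- The generator `τ_i` of `SB_n(M)`. -/
def sτ (n g : ℕ) (i : ℕ) : SingBraidMonoid n g := smk n g (mT n g i)

/-- `δ_i = σ_i τ_i` in `SB_n(M)`. -/
def sδ (n g : ℕ) (i : ℕ) : SingBraidMonoid n g := sσ n g i * sτ n g i

/-- `ι : B_n(M) → SB_n(M)` is the canonical monoid homomorphism sending `σ_i^{±1}` to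
`σ_i^{±1}` and `a_k^{±1}` to `a_k^{±1}`. -/
def IsIota (n g : ℕ) (ι : SurfBraidGroup n g →* SingBraidMonoid n g) : Prop :=
  (∀ i, 1 ≤ i → i ≤ n - 1 → ι (Bσ n g i) = sσ n g i ∧ ι ((Bσ n g i)⁻¹) = sσi n g i) ∧
  (∀ k, 1 ≤ k → k ≤ 2 * g → ι (Ba n g k) = sa n g k ∧ ι ((Ba n g k)⁻¹) = sai n g k)

/-- The set `Υ̂ = {ι(α) δ_i ι(α)⁻¹ : α ∈ B_n(M), 1 ≤ i ≤ n-1} ⊆ SB_n(M)`. -/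
def UpsHat (n g : ℕ) (ι : SurfBraidGroup n g →* SingBraidMonoid n g) :
    Set (SingBraidMonoid n g) :=
  { x | ∃ α : SurfBraidGroup n g, ∃ i : ℕ, 1 ≤ i ∧ i ≤ n - 1 ∧
      x = ι α * sδ n g i * ι α⁻¹ }

/-- The defining property of the desingularization map
`η : SB_n(M) → ℤ[B_n(M)]`: `η(σ_i^{±1}) = σ_i^{±1}`, `η(a_k^{±1}) = a_k^{±1}`,
`η(τ_i) = σ_i - σ_i⁻¹`. -/
def IsEta (n g : ℕ) (η : SingBraidMonoid n g →* MonoidAlgebra ℤ (SurfBraidGroup n g)) : Prop :=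
  (∀ i, 1 ≤ i → i ≤ n - 1 →
    η (sσ n g i) = MonoidAlgebra.of ℤ (SurfBraidGroup n g) (Bσ n g i) ∧
    η (sσi n g i) = MonoidAlgebra.of ℤ (SurfBraidGroup n g) ((Bσ n g i)⁻¹)) ∧
  (∀ k, 1 ≤ k → k ≤ 2 * g →
    η (sa n g k) = MonoidAlgebra.of ℤ (SurfBraidGroup n g) (Ba n g k) ∧
    η (sai n g k) = MonoidAlgebra.of ℤ (SurfBraidGroup n g) ((Ba n g k)⁻¹)) ∧
  (∀ i, 1 ≤ i → i ≤ n - 1 →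
    η (sτ n g i) = MonoidAlgebra.of ℤ (SurfBraidGroup n g) (Bσ n g i) -
      MonoidAlgebra.of ℤ (SurfBraidGroup n g) ((Bσ n g i)⁻¹))

/-- The defining property of `ν : M(Ω) → ℤ[K_n(M)]`: `ν(u) = u - 1` for every vertex `u ∈ Υ`. -/
def IsNu (n g : ℕ)
    (ν : GraphMonoid (commE (Ups n g)) →* MonoidAlgebra ℤ ↥(Ksub n g)) : Prop :=
  ∀ u : ↥(Ups n g),
    ν (gvert (commE (Ups n g)) u) =
      MonoidAlgebra.of ℤ ↥(Ksub n g) ⟨u.1, Subgroup.subset_closure u.2⟩ - 1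

/-- Every element of `Υ_{i j}` lies in `Υ`. -/
theorem upsIJ_subset_Ups (n g : ℕ) (θ : SurfBraidGroup n g →* Equiv.Perm (Fin n))
    (i j : ℕ) (h1 : 1 ≤ i) (h2 : i < j) (h3 : j ≤ n) (hn : 2 ≤ n) :
    UpsIJ n g θ i j ⊆ Ups n g := by
  rintro x ⟨β, _hβ, rfl⟩
  refine ⟨β * bmk n g (prodAsc (bS n g) i (j - 2)), j - 1, by omega, by omega, ?_⟩
  simp only [bT, Bσ, map_mul, map_pow, map_inv, mul_inv_rev]
  group

/-- Every element of `Υ_{i j}` lies in `K_n(M)`. -/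
theorem upsIJ_subset_Ksub (n g : ℕ) (θ : SurfBraidGroup n g →* Equiv.Perm (Fin n))
    (i j : ℕ) (h1 : 1 ≤ i) (h2 : i < j) (h3 : j ≤ n) (hn : 2 ≤ n) :
    ∀ u ∈ UpsIJ n g θ i j, u ∈ Ksub n g := fun _ hu =>
  Subgroup.subset_closure (upsIJ_subset_Ups n g θ i j h1 h2 h3 hn hu)

/-- The canonical monoid homomorphism out of a graph monoid induced by a map on vertices
whose values pairwise commute along edges. -/
def gmLift {X M : Type*} [Monoid M] (E : X → X → Prop) (f : X → M)
    (h : ∀ x y, E x y → f x * f y = f y * f x) : GraphMonoid E →* M :=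
  Con.lift _ (FreeMonoid.lift f) (by
    refine Con.conGen_le.mpr ?_
    rintro w₁ w₂ ⟨x, y, hxy, rfl, rfl⟩
    show FreeMonoid.lift f _ = FreeMonoid.lift f _
    simp only [map_mul, FreeMonoid.lift_eval_of]
    exact h x y hxy)

namespace FMNu
open FreeGroup List MonoidAlgebra

variable {X : Type*} [DecidableEq X]

def Rd : (X × Bool) → (X × Bool) → Prop := fun p q => ¬(p.1 = q.1 ∧ p.2 = !q.2)

lemma chain'_reduce (L : List (X × Bool)) : List.IsChain Rd (reduce L) := by
  induction L with
  | nil => simp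
  | cons x L ih =>
    rw [reduce.cons]
    cases h : reduce L with
    | nil => simp
    | cons y t =>
      rw [h] at ih
      dsimp only
      split_ifs with hc
      · exact ih.tail
      · exact List.isChain_cons_cons.mpr ⟨hc, ih⟩

lemma reduce_eq_self_of_chain' {L : List (X × Bool)} (h : List.IsChain Rd L) : reduce L = L := by
  induction L with
  | nil => rfl
  | cons x L ih =>
    rw [reduce.cons, ih h.tail]
    cases L with
    | nil => rfl
    | cons y t =>
      have hr : Rd x y := (List.isChain_cons_cons.mp h).1
      simp only [Rd] at hr
      simp only [List.casesOn]
      rw [if_neg hr]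

lemma chain'_toWord (g : FreeGroup X) : List.IsChain Rd g.toWord := by
  rw [← reduce_toWord]; exact chain'_reduce _

lemma chain'_invRev {L : List (X × Bool)} (h : List.IsChain Rd L) :
    List.IsChain Rd (invRev L) := by
  rw [FreeGroup.invRev, List.isChain_reverse, List.isChain_map]
  refine h.imp ?_
  rintro ⟨a, b⟩ ⟨a', b'⟩ hr ⟨h1, h2⟩
  exact hr ⟨h1.symm, by revert h2; cases b <;> cases b' <;> simp⟩

lemma head?_invRev (L : List (X × Bool)) :
    (invRev L).head? = L.getLast?.map (fun p => (p.1, !p.2)) := by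
  rw [FreeGroup.invRev, List.head?_reverse, List.getLast?_map]

/-- key word computation: `toWord (γ * (FreeGroup.of x)^n * γ⁻¹)` when `γ` doesn't end in `x^{±1}`. -/
lemma toWord_conj_pow (γ : FreeGroup X) (x : X) (n : ℕ) (hn : 0 < n)
    (hγ : ∀ p ∈ γ.toWord.getLast?, p.1 ≠ x) :
    (γ * FreeGroup.of x ^ n * γ⁻¹).toWord
      = γ.toWord ++ List.replicate n (x, true) ++ invRev γ.toWord := by
  have h1 : γ * FreeGroup.of x ^ n * γ⁻¹ = mk (γ.toWord ++ List.replicate n (x, true) ++ invRev γ.toWord) := by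
    conv_lhs => rw [← mk_toWord (x := γ)]
    rw [inv_mk, ← mk_toWord (x := FreeGroup.of x ^ n), toWord_of_pow, mul_mk, mul_mk]
  rw [h1, toWord_mk]
  apply reduce_eq_self_of_chain'
  have hw := chain'_toWord γ
  have hrep : List.IsChain Rd (List.replicate n (x, true) : List (X × Bool)) :=
    List.isChain_replicate_of_rel n (by simp [Rd])
  rw [List.append_assoc, List.isChain_append]
  refine ⟨hw, ?_, ?_⟩
  · rw [List.isChain_append]
    refine ⟨hrep, chain'_invRev hw, ?_⟩
    intro p hp q hq
    rw [List.getLast?_replicate, if_neg (Nat.pos_iff_ne_zero.mp hn)] at hp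
    rw [head?_invRev, Option.mem_def, Option.map_eq_some_iff] at hq
    obtain ⟨r, hr, rfl⟩ := hq
    have := hγ r hr
    cases hp
    exact fun hh => this hh.1.symm
  · intro p hp q hq
    rw [List.head?_append, List.head?_replicate, if_neg (Nat.pos_iff_ne_zero.mp hn)] at hq
    simp only [Option.or_some, Option.mem_def, Option.some.injEq] at hq
    cases hq
    exact fun hh => hγ p hp hh.1

lemma mk_singleton_mem_zpowers (x : X) (b : Bool) :
    mk [(x, b)] ∈ Subgroup.zpowers (FreeGroup.of x) := by
  cases b
  · have : (mk [(x, false)] : FreeGroup X) = (FreeGroup.of x)⁻¹ := by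
      rw [show (FreeGroup.of x : FreeGroup X) = mk [(x, true)] from rfl, inv_mk]
      simp [invRev]
    rw [this]; exact inv_mem (Subgroup.mem_zpowers _)
  · exact Subgroup.mem_zpowers _

lemma commute_mk_singleton (x : X) (b : Bool) : Commute (mk [(x, b)]) (FreeGroup.of x) := by
  obtain ⟨k, hk⟩ := Subgroup.mem_zpowers_iff.mp (mk_singleton_mem_zpowers x b)
  rw [← hk]
  exact (Commute.refl (FreeGroup.of x)).zpow_left k

lemma decomp_last {g : FreeGroup X} {w : List (X × Bool)} {p : X × Bool}
    (h : g.toWord = w ++ [p]) : g = mk w * mk [p] ∧ (mk w).toWord = w := by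
  have hg : g = mk (w ++ [p]) := by rw [← h, mk_toWord]
  have hc : IsChain Rd w := by
    have hcw := chain'_toWord g
    rw [h] at hcw
    exact (List.isChain_append.mp hcw).1
  exact ⟨by rw [hg, ← mul_mk], by rw [toWord_mk, reduce_eq_self_of_chain' hc]⟩

lemma centralizer_of_aux (x : X) :
    ∀ n, ∀ g : FreeGroup X, g.toWord.length ≤ n →
    g * FreeGroup.of x = FreeGroup.of x * g → g ∈ Subgroup.zpowers (FreeGroup.of x) := by
  intro n
  induction n with
  | zero =>
    intro g hlen _
    have : g.toWord = [] := List.eq_nil_of_length_eq_zero (Nat.le_zero.mp hlen)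
    rw [toWord_eq_nil_iff.mp this]
    exact one_mem _
  | succ n ih =>
    intro g hlen hcomm
    rcases List.eq_nil_or_concat g.toWord with hnil | ⟨w, p, hw⟩
    · rw [toWord_eq_nil_iff.mp hnil]; exact one_mem _
    rw [List.concat_eq_append] at hw
    obtain ⟨hg, hmkw⟩ := decomp_last hw
    by_cases hpx : p.1 = x
    · obtain ⟨px, b⟩ := p
      subst hpx
      have hcom2 : Commute (mk w) (FreeGroup.of px) := by
        have h1 : Commute g (FreeGroup.of px) := hcomm
        have h2 : Commute (mk [(px, b)]) (FreeGroup.of px) := commute_mk_singleton px b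
        have : (mk w : FreeGroup X) = g * (mk [(px, b)])⁻¹ := by
          rw [hg]; group
        rw [this]
        exact h1.mul_left h2.inv_left
      have hlen2 : (mk w).toWord.length ≤ n := by
        rw [hmkw]
        have := congrArg List.length hw
        simp at this
        omega
      have := ih (mk w) hlen2 hcom2
      rw [hg]
      exact mul_mem this (mk_singleton_mem_zpowers px b)
    · exfalso
      have hconj : g * FreeGroup.of x ^ 1 * g⁻¹ = FreeGroup.of x := by
        rw [pow_one, hcomm]; group
      have hlast : ∀ q ∈ g.toWord.getLast?, q.1 ≠ x := by
        intro q hq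
        rw [hw, List.getLast?_concat] at hq
        cases hq
        exact hpx
      have hL := toWord_conj_pow g x 1 one_pos hlast
      rw [hconj, toWord_of] at hL
      have hlen3 := congrArg List.length hL
      simp only [hw, List.length_append, List.length_singleton, List.length_replicate,
        invRev_length, List.length_cons, List.length_nil] at hlen3
      omega

lemma centralizer_of {x : X} {g : FreeGroup X} (h : g * FreeGroup.of x = FreeGroup.of x * g) :
    g ∈ Subgroup.zpowers (FreeGroup.of x) :=
  centralizer_of_aux x g.toWord.length g le_rfl h

def Ys (X : Type*) : Set (FreeGroup X) :=
  {w | ∃ (γ : FreeGroup X) (x : X), w = γ * FreeGroup.of x * γ⁻¹}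

lemma canon_aux :
    ∀ n, ∀ (γ : FreeGroup X) (x : X), γ.toWord.length ≤ n →
    ∃ δ z, γ * FreeGroup.of x * γ⁻¹ = δ * FreeGroup.of z * δ⁻¹ ∧ ∀ p ∈ δ.toWord.getLast?, p.1 ≠ z := by
  intro n
  induction n with
  | zero =>
    intro γ x hlen
    have h0 : γ.toWord = [] := List.eq_nil_of_length_eq_zero (Nat.le_zero.mp hlen)
    exact ⟨γ, x, rfl, by rw [h0]; simp⟩
  | succ n ih =>
    intro γ x hlen
    rcases List.eq_nil_or_concat γ.toWord with hnil | ⟨w, p, hw⟩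
    · exact ⟨γ, x, rfl, by rw [hnil]; simp⟩
    rw [List.concat_eq_append] at hw
    obtain ⟨hγ, hmkw⟩ := decomp_last hw
    by_cases hpx : p.1 = x
    · obtain ⟨px, b⟩ := p
      subst hpx
      have key : γ * FreeGroup.of px * γ⁻¹ = mk w * FreeGroup.of px * (mk w)⁻¹ := by
        rw [hγ, mul_inv_rev]
        have hc := commute_mk_singleton px b
        calc mk w * mk [(px, b)] * FreeGroup.of px * ((mk [(px, b)])⁻¹ * (mk w)⁻¹)
            = mk w * (mk [(px, b)] * FreeGroup.of px * (mk [(px, b)])⁻¹) * (mk w)⁻¹ := by group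
          _ = mk w * FreeGroup.of px * (mk w)⁻¹ := by rw [hc.eq]; group
      have hlen2 : (mk w).toWord.length ≤ n := by
        rw [hmkw]
        have := congrArg List.length hw
        simp only [List.length_append, List.length_singleton] at this
        omega
      obtain ⟨δ, z, heq, hcan⟩ := ih (mk w) px hlen2
      exact ⟨δ, z, key.trans heq, hcan⟩
    · exact ⟨γ, x, rfl, by
        intro q hq
        rw [hw, List.getLast?_concat] at hq
        cases hq
        exact hpx⟩


lemma canon {y : FreeGroup X} (hy : y ∈ Ys X) :
    ∃ δ z, y = δ * FreeGroup.of z * δ⁻¹ ∧ ∀ p ∈ δ.toWord.getLast?, p.1 ≠ z := by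
  obtain ⟨γ, x, rfl⟩ := hy
  exact canon_aux γ.toWord.length γ x le_rfl

/-- total exponent-sum homomorphism -/
def expSum : FreeGroup X →* Multiplicative ℤ :=
  FreeGroup.lift fun _ => Multiplicative.ofAdd 1

/-- exponent sum at a single generator -/
def expAt (x : X) : FreeGroup X →* Multiplicative ℤ :=
  FreeGroup.lift fun s => Multiplicative.ofAdd (if s = x then 1 else 0)

def ee (g : FreeGroup X) : ℤ := Multiplicative.toAdd (expSum g)

@[simp] lemma ee_one : ee (1 : FreeGroup X) = 0 := by simp [ee]

@[simp] lemma ee_mul (g h : FreeGroup X) : ee (g * h) = ee g + ee h := by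
  simp [ee]

@[simp] lemma ee_inv (g : FreeGroup X) : ee g⁻¹ = -ee g := by simp [ee]

@[simp] lemma ee_of (x : X) : ee (FreeGroup.of x : FreeGroup X) = 1 := by
  simp [ee, expSum, FreeGroup.lift_apply_of]

@[simp] lemma ee_zpow (g : FreeGroup X) (k : ℤ) : ee (g ^ k) = k * ee g := by
  simp [ee]

lemma ee_Ys {y : FreeGroup X} (hy : y ∈ Ys X) : ee y = 1 := by
  obtain ⟨γ, x, rfl⟩ := hy
  simp

/-- conjugates FreeGroup.of generators lie in `Ys`, conjugation-stable -/
lemma conj_mem_Ys {y : FreeGroup X} (hy : y ∈ Ys X) (g : FreeGroup X) :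
    g * y * g⁻¹ ∈ Ys X := by
  obtain ⟨γ, x, rfl⟩ := hy
  exact ⟨g * γ, x, by group⟩

/-- membership in zpowers with exponent read off by ee -/
lemma zpowers_eq {y h : FreeGroup X} (hy : y ∈ Ys X) (hh : h ∈ Subgroup.zpowers y) :
    h = y ^ (ee h) := by
  obtain ⟨k, hk⟩ := Subgroup.mem_zpowers_iff.mp hh
  have : ee h = k * ee y := by rw [← hk]; simp
  rw [ee_Ys hy, mul_one] at this
  rw [this, hk]

/-- Unique roots within Ys, positive powers -/
lemma eq_of_pow_eq {y z : FreeGroup X} (hy : y ∈ Ys X) (hz : z ∈ Ys X) {m : ℕ}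
    (hm : 0 < m) (h : y ^ m = z ^ m) : y = z := by
  obtain ⟨γ, x, rfl, hcγ⟩ := canon hy
  obtain ⟨δ, x', rfl, hcδ⟩ := canon hz
  have hx : x' = x := by
    by_contra hne
    have e1 : expAt x (γ * FreeGroup.of x * γ⁻¹) = Multiplicative.ofAdd 1 := by
      simp [expAt, FreeGroup.lift_apply_of, mul_inv_cancel_comm]
    have e2 : expAt x (δ * FreeGroup.of x' * δ⁻¹) = Multiplicative.ofAdd 0 := by
      simp [expAt, FreeGroup.lift_apply_of, mul_inv_cancel_comm, if_neg hne]
    have happ := congrArg (expAt x) h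
    rw [map_pow, map_pow, e1, e2] at happ
    have : (m : ℤ) * 1 = (m : ℤ) * 0 := by
      simpa [← ofAdd_nsmul] using happ
    omega
  subst hx
  rw [conj_pow, conj_pow] at h
  have hw := congrArg toWord h
  rw [toWord_conj_pow γ x' m hm hcγ, toWord_conj_pow δ x' m hm hcδ] at hw
  have hlen : γ.toWord.length = δ.toWord.length := by
    have := congrArg List.length hw
    simp only [List.length_append, invRev_length, List.length_replicate] at this
    omega
  rw [List.append_assoc, List.append_assoc] at hw
  have hγδ : γ = δ := toWord_injective (List.append_inj hw hlen).1
  rw [hγδ]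

/-- Unique roots within Ys -/
lemma eq_of_zpow_eq {y z : FreeGroup X} (hy : y ∈ Ys X) (hz : z ∈ Ys X) {n : ℤ}
    (hn : n ≠ 0) (h : y ^ n = z ^ n) : y = z := by
  rcases lt_or_gt_of_ne hn with hneg | hpos
  · have h' : y ^ (-n).toNat = z ^ (-n).toNat := by
      have : y ^ (-n) = z ^ (-n) := by rw [zpow_neg, zpow_neg, h]
      rw [← zpow_natCast, ← zpow_natCast, Int.toNat_of_nonneg (by omega)]
      exact this
    exact eq_of_pow_eq hy hz (m := (-n).toNat) (by omega) h'
  · have h' : y ^ n.toNat = z ^ n.toNat := by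
      rw [← zpow_natCast, ← zpow_natCast, Int.toNat_of_nonneg (by omega)]
      exact h
    exact eq_of_pow_eq hy hz (m := n.toNat) (by omega) h'

/-- two conjugators sending `c` to the same `y` differ by a power FreeGroup.of `y` -/
lemma conj_coset {c y g₁ g₂ : FreeGroup X} (hc : c ∈ Ys X)
    (h₁ : g₁ * c * g₁⁻¹ = y) (h₂ : g₂ * c * g₂⁻¹ = y) :
    g₁ * g₂⁻¹ ∈ Subgroup.zpowers y := by
  obtain ⟨δ, x, rfl⟩ := hc
  have hcomm : (g₂⁻¹ * g₁) * (δ * FreeGroup.of x * δ⁻¹) = (δ * FreeGroup.of x * δ⁻¹) * (g₂⁻¹ * g₁) := by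
    have h3 := h₁.trans h₂.symm
    have h4 := congrArg (fun t => g₂⁻¹ * t * g₁) h3
    simpa [mul_assoc] using h4
  have hw : (δ⁻¹ * (g₂⁻¹ * g₁) * δ) * FreeGroup.of x = FreeGroup.of x * (δ⁻¹ * (g₂⁻¹ * g₁) * δ) := by
    have h5 := congrArg (fun t => δ⁻¹ * t * δ) hcomm
    simpa [mul_assoc] using h5
  obtain ⟨k, hk⟩ := Subgroup.mem_zpowers_iff.mp (centralizer_of hw)
  have hv : g₂⁻¹ * g₁ = (δ * FreeGroup.of x * δ⁻¹) ^ k := by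
    rw [conj_zpow, hk]; group
  have hfin : g₁ * g₂⁻¹ = y ^ k := by
    rw [← h₂, conj_zpow, ← hv]; group
  rw [hfin]
  exact zpow_mem (Subgroup.mem_zpowers y) k

noncomputable def phi (y g : FreeGroup X) : FreeGroup X := y ^ (-(ee g)) * g

noncomputable def T (y : FreeGroup X) :
    MonoidAlgebra ℤ (FreeGroup X) →+ MonoidAlgebra ℤ (FreeGroup X) :=
  { toFun := MonoidAlgebra.mapDomain (phi y)
    map_zero' := MonoidAlgebra.mapDomain_zero _
    map_add' := MonoidAlgebra.mapDomain_add _ }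

lemma T_single (y g : FreeGroup X) (r : ℤ) :
    T y (MonoidAlgebra.single g r) = MonoidAlgebra.single (phi y g) r := by
  show MonoidAlgebra.mapDomain (phi y) _ = _
  rw [MonoidAlgebra.mapDomain_single]

lemma T_one (y : FreeGroup X) : T y (1 : MonoidAlgebra ℤ (FreeGroup X)) = 1 := by
  rw [MonoidAlgebra.one_def, T_single]
  have : phi y 1 = 1 := by
    unfold phi; rw [ee_one, neg_zero, zpow_zero, one_mul]
  rw [this]

lemma T_mul_single {y c : FreeGroup X} (hc : ee c = 1)
    (P : MonoidAlgebra ℤ (FreeGroup X)) :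
    T y (P * MonoidAlgebra.single c 1) =
      MonoidAlgebra.single y⁻¹ 1 * T y P * MonoidAlgebra.single c 1 := by
  induction P using MonoidAlgebra.induction_linear with
  | zero => simp
  | add f g hf hg =>
    rw [add_mul, map_add, hf, hg, map_add, mul_add, add_mul]
  | single g r =>
    rw [MonoidAlgebra.single_mul_single, T_single, T_single,
      MonoidAlgebra.single_mul_single, MonoidAlgebra.single_mul_single]
    have hgrp : phi y (g * c) = y⁻¹ * phi y g * c := by
      unfold phi
      rw [ee_mul, hc]
      group
    rw [hgrp]
    ring_nf

noncomputable def Rr (y : FreeGroup X) : List (FreeGroup X) → MonoidAlgebra ℤ (FreeGroup X)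
  | [] => 1
  | c :: l => Rr y l - MonoidAlgebra.single y⁻¹ 1 * Rr y l * MonoidAlgebra.single c 1

noncomputable def listProd (l : List (FreeGroup X)) : MonoidAlgebra ℤ (FreeGroup X) :=
  (l.map (fun c => MonoidAlgebra.single c 1 - 1)).prod

lemma listProd_nil : listProd ([] : List (FreeGroup X)) = 1 := rfl

lemma listProd_cons (c : FreeGroup X) (l : List (FreeGroup X)) :
    listProd (c :: l) = (MonoidAlgebra.single c 1 - 1) * listProd l := by
  simp [listProd]

lemma listProd_concat (c : FreeGroup X) (l : List (FreeGroup X)) :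
    listProd (l ++ [c]) = listProd l * (MonoidAlgebra.single c 1 - 1) := by
  simp [listProd]

lemma bridge (y : FreeGroup X) (l : List (FreeGroup X)) (hl : ∀ c ∈ l, ee c = 1) :
    T y (listProd l) = ((-1 : ℤ) ^ l.length) • Rr y l.reverse := by
  induction l using List.reverseRecOn with
  | nil => simpa [listProd_nil, Rr] using T_one y
  | append_singleton l c ih =>
    have hc : ee c = 1 := hl c (by simp)
    have hl' : ∀ c ∈ l, ee c = 1 := fun d hd => hl d (by simp [hd])
    rw [listProd_concat, mul_sub, mul_one, map_sub, T_mul_single hc, ih hl',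
      List.reverse_append]
    simp only [List.reverse_singleton, List.singleton_append, Rr, List.length_append,
      List.length_singleton, List.nil_append, List.append_eq]
    rw [mul_smul_comm, smul_mul_assoc, ← smul_sub, pow_succ, mul_smul]
    congr 1
    rw [neg_one_smul, neg_sub]

lemma Rr_concat_self (y : FreeGroup X) (l : List (FreeGroup X)) :
    Rr y (l ++ [y]) = 0 := by
  induction l with
  | nil =>
    simp only [List.nil_append, Rr]
    rw [mul_one, MonoidAlgebra.single_mul_single, inv_mul_cancel, one_mul,
      ← MonoidAlgebra.one_def, sub_self]
  | cons a l ih =>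
    simp only [List.cons_append, Rr, List.append_eq]
    rw [ih]
    simp

def Inv (y : FreeGroup X) (W : MonoidAlgebra ℤ (FreeGroup X)) : Prop :=
  ∃ g ∈ W.coeff.support, ∃ h ∈ W.coeff.support, g * h⁻¹ ∉ Subgroup.zpowers y

lemma coeff_sub_conj (y c : FreeGroup X) (W : MonoidAlgebra ℤ (FreeGroup X)) (t : FreeGroup X) :
    (W - MonoidAlgebra.single y⁻¹ (1:ℤ) * W * MonoidAlgebra.single c (1:ℤ)).coeff t
      = W.coeff t - W.coeff (y * t * c⁻¹) := by
  rw [MonoidAlgebra.coeff_sub, Finsupp.sub_apply]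
  congr 1
  rw [mul_assoc, MonoidAlgebra.coeff_single_mul_apply, one_mul, inv_inv,
    MonoidAlgebra.coeff_mul_single_apply, mul_one]

lemma step_inv {y c : FreeGroup X} (hy : y ∈ Ys X) (hc : c ∈ Ys X)
    {W : MonoidAlgebra ℤ (FreeGroup X)} (hW : Inv y W) :
    Inv y (W - MonoidAlgebra.single y⁻¹ (1:ℤ) * W * MonoidAlgebra.single c (1:ℤ)) := by
  classical
  obtain ⟨g₁, hg₁, g₂, hg₂, hne⟩ := hW
  have hex : ∃ g ∈ W.coeff.support, g * c * g⁻¹ ≠ y := by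
    by_contra hall
    push_neg at hall
    exact hne (conj_coset hc (hall g₁ hg₁) (hall g₂ hg₂))
  obtain ⟨g, hgsup, hgc⟩ := hex
  have rel_unique : ∀ (h : FreeGroup X) (k l : ℤ),
      h * (g * c ^ k)⁻¹ ∈ Subgroup.zpowers y →
      h * (g * c ^ l)⁻¹ ∈ Subgroup.zpowers y → k = l := by
    intro h k l hk hl
    obtain ⟨p, hp⟩ := Subgroup.mem_zpowers_iff.mp hk
    obtain ⟨q, hq⟩ := Subgroup.mem_zpowers_iff.mp hl
    have e1 : y ^ p * (g * c ^ k) = h := by rw [hp]; group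
    have e2 : y ^ q * (g * c ^ l) = h := by rw [hq]; group
    have h1 : y ^ p * (g * c ^ k) = y ^ q * (g * c ^ l) := e1.trans e2.symm
    have h2 : y ^ (p - q) = g * c ^ (l - k) * g⁻¹ := by
      calc y ^ (p - q) = y ^ (-q) * y ^ p := by group
        _ = (y ^ (-q) * (y ^ p * (g * c ^ k))) * (g * c ^ k)⁻¹ := by group
        _ = (y ^ (-q) * (y ^ q * (g * c ^ l))) * (g * c ^ k)⁻¹ := by rw [h1]
        _ = g * c ^ (l - k) * g⁻¹ := by group
    by_contra hkl
    have hlk : l - k ≠ 0 := fun hh => hkl (by omega)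
    have hee : p - q = l - k := by
      have := congrArg ee h2
      rw [ee_zpow, ee_Ys hy, mul_one, ee_mul, ee_mul, ee_inv, ee_zpow, ee_Ys hc] at this
      omega
    have h3 : (g * c * g⁻¹) ^ (l - k) = y ^ (l - k) := by
      rw [conj_zpow, ← h2, hee]
    exact hgc (eq_of_zpow_eq (conj_mem_Ys hc g) hy hlk h3)
  set lev : FreeGroup X → ℤ := fun h =>
    if hh : ∃ k : ℤ, h * (g * c ^ k)⁻¹ ∈ Subgroup.zpowers y then hh.choose else 0 with hlev
  set K : Finset ℤ :=
    (W.coeff.support.filter (fun h => ∃ k : ℤ, h * (g * c ^ k)⁻¹ ∈ Subgroup.zpowers y)).image lev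
    with hK
  have hmem_of_rel : ∀ h ∈ W.coeff.support, ∀ k : ℤ,
      h * (g * c ^ k)⁻¹ ∈ Subgroup.zpowers y → k ∈ K := by
    intro h hh k hk
    have hexk : ∃ k : ℤ, h * (g * c ^ k)⁻¹ ∈ Subgroup.zpowers y := ⟨k, hk⟩
    have hchoose : lev h = k := by
      rw [hlev]; dsimp only; rw [dif_pos hexk]
      exact rel_unique h _ k hexk.choose_spec hk
    rw [hK]
    exact Finset.mem_image.mpr ⟨h, Finset.mem_filter.mpr ⟨hh, hexk⟩, hchoose⟩
  have hrel_of_mem : ∀ k ∈ K, ∃ h ∈ W.coeff.support,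
      h * (g * c ^ k)⁻¹ ∈ Subgroup.zpowers y := by
    intro k hk
    rw [hK] at hk
    obtain ⟨h, hf, hlevh⟩ := Finset.mem_image.mp hk
    obtain ⟨hhsup, hexk⟩ := Finset.mem_filter.mp hf
    refine ⟨h, hhsup, ?_⟩
    have : lev h = hexk.choose := by rw [hlev]; dsimp only; rw [dif_pos hexk]
    rw [← hlevh, this]
    exact hexk.choose_spec
  have hrelg : g * (g * c ^ (0:ℤ))⁻¹ ∈ Subgroup.zpowers y := by
    rw [zpow_zero, mul_one, mul_inv_cancel]
    exact one_mem _
  have hKne : K.Nonempty := ⟨0, hmem_of_rel g hgsup 0 hrelg⟩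
  obtain ⟨h₁, hh₁sup, hh₁rel⟩ := hrel_of_mem _ (K.min'_mem hKne)
  obtain ⟨h₃, hh₃sup, hh₃rel⟩ := hrel_of_mem _ (K.max'_mem hKne)
  -- h₁ survives in W'
  have hnot1 : (y * h₁ * c⁻¹) ∉ W.coeff.support := by
    intro hmem
    have hrel' : (y * h₁ * c⁻¹) * (g * c ^ (K.min' hKne - 1))⁻¹ ∈ Subgroup.zpowers y := by
      have hidty : (y * h₁ * c⁻¹) * (g * c ^ (K.min' hKne - 1))⁻¹
          = y * (h₁ * (g * c ^ (K.min' hKne))⁻¹) := by group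
      rw [hidty]
      exact mul_mem (Subgroup.mem_zpowers y) hh₁rel
    have := K.min'_le _ (hmem_of_rel _ hmem _ hrel')
    omega
  have hW'h₁ : (W - MonoidAlgebra.single y⁻¹ (1:ℤ) * W * MonoidAlgebra.single c (1:ℤ)).coeff h₁ = W.coeff h₁ := by
    rw [coeff_sub_conj, Finsupp.notMem_support_iff.mp hnot1, sub_zero]
  have hmem1 : h₁ ∈ (W - MonoidAlgebra.single y⁻¹ (1:ℤ) * W * MonoidAlgebra.single c (1:ℤ)).coeff.support := by
    rw [Finsupp.mem_support_iff, hW'h₁]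
    exact Finsupp.mem_support_iff.mp hh₁sup
  -- h₂ := y⁻¹ * h₃ * c appears in W'
  have hnot2 : (y⁻¹ * h₃ * c) ∉ W.coeff.support := by
    intro hmem
    have hrel' : (y⁻¹ * h₃ * c) * (g * c ^ (K.max' hKne + 1))⁻¹ ∈ Subgroup.zpowers y := by
      have hidty : (y⁻¹ * h₃ * c) * (g * c ^ (K.max' hKne + 1))⁻¹
          = y⁻¹ * (h₃ * (g * c ^ (K.max' hKne))⁻¹) := by group
      rw [hidty]
      exact mul_mem (inv_mem (Subgroup.mem_zpowers y)) hh₃rel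
    have := K.le_max' _ (hmem_of_rel _ hmem _ hrel')
    omega
  have hW'h₂ : (W - MonoidAlgebra.single y⁻¹ (1:ℤ) * W * MonoidAlgebra.single c (1:ℤ)).coeff (y⁻¹ * h₃ * c)
      = - W.coeff h₃ := by
    rw [coeff_sub_conj, Finsupp.notMem_support_iff.mp hnot2]
    have : y * (y⁻¹ * h₃ * c) * c⁻¹ = h₃ := by group
    rw [this, zero_sub]
  have hmem2 : (y⁻¹ * h₃ * c) ∈
      (W - MonoidAlgebra.single y⁻¹ (1:ℤ) * W * MonoidAlgebra.single c (1:ℤ)).coeff.support := by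
    rw [Finsupp.mem_support_iff, hW'h₂]
    simpa using Finsupp.mem_support_iff.mp hh₃sup
  refine ⟨h₁, hmem1, y⁻¹ * h₃ * c, hmem2, ?_⟩
  intro hmem
  have hrelh₂min : (y⁻¹ * h₃ * c) * (g * c ^ (K.min' hKne))⁻¹ ∈ Subgroup.zpowers y := by
    have hidty : (y⁻¹ * h₃ * c) * (g * c ^ (K.min' hKne))⁻¹
        = (h₁ * (y⁻¹ * h₃ * c)⁻¹)⁻¹ * (h₁ * (g * c ^ (K.min' hKne))⁻¹) := by group
    rw [hidty]
    exact mul_mem (inv_mem hmem) hh₁rel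
  have hrelh₂max : (y⁻¹ * h₃ * c) * (g * c ^ (K.max' hKne + 1))⁻¹ ∈ Subgroup.zpowers y := by
    have hidty : (y⁻¹ * h₃ * c) * (g * c ^ (K.max' hKne + 1))⁻¹
        = y⁻¹ * (h₃ * (g * c ^ (K.max' hKne))⁻¹) := by group
    rw [hidty]
    exact mul_mem (inv_mem (Subgroup.mem_zpowers y)) hh₃rel
  have heq := rel_unique _ _ _ hrelh₂min hrelh₂max
  have hle : K.min' hKne ≤ K.max' hKne := K.min'_le _ (K.max'_mem hKne)
  omega

lemma Rr_singleton (y c : FreeGroup X) :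
    Rr y [c] = 1 - MonoidAlgebra.single (y⁻¹ * c) (1:ℤ) := by
  simp only [Rr]
  rw [mul_one, MonoidAlgebra.single_mul_single, one_mul]

lemma inv_base {y c : FreeGroup X} (hy : y ∈ Ys X) (hc : c ∈ Ys X) (hne : c ≠ y) :
    Inv y (Rr y [c]) := by
  rw [Rr_singleton]
  have ha : y⁻¹ * c ≠ 1 := fun h => hne (by rw [← inv_mul_cancel y] at h; exact mul_left_cancel h)
  have hval1 : (1 - MonoidAlgebra.single (y⁻¹ * c) (1:ℤ)).coeff 1 = 1 := by
    rw [MonoidAlgebra.coeff_sub, Finsupp.sub_apply, MonoidAlgebra.one_def,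
      MonoidAlgebra.coeff_single, MonoidAlgebra.coeff_single, Finsupp.single_apply, Finsupp.single_apply,
      if_pos rfl, if_neg ha, sub_zero]
  have hval2 : (1 - MonoidAlgebra.single (y⁻¹ * c) (1:ℤ)).coeff (y⁻¹ * c) = -1 := by
    rw [MonoidAlgebra.coeff_sub, Finsupp.sub_apply, MonoidAlgebra.one_def,
      MonoidAlgebra.coeff_single, MonoidAlgebra.coeff_single, Finsupp.single_apply, Finsupp.single_apply,
      if_pos rfl, if_neg (fun h => ha h.symm), zero_sub]
  refine ⟨1, Finsupp.mem_support_iff.mpr (by rw [hval1]; norm_num),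
    y⁻¹ * c, Finsupp.mem_support_iff.mpr (by rw [hval2]; norm_num), ?_⟩
  intro hmem
  obtain ⟨k, hk⟩ := Subgroup.mem_zpowers_iff.mp hmem
  have h1 : (1:FreeGroup X) * (y⁻¹ * c)⁻¹ = c⁻¹ * y := by group
  rw [h1] at hk
  have hke : k = 0 := by
    have := congrArg ee hk
    rw [ee_zpow, ee_Ys hy, mul_one, ee_mul, ee_inv, ee_Ys hy, ee_Ys hc] at this
    omega
  rw [hke, zpow_zero] at hk
  have : c = y := by
    have h5 := congrArg (fun t => c * t * y⁻¹ * y) hk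
    simpa [mul_assoc] using h5
  exact hne this

lemma inv_Rr {y : FreeGroup X} (hy : y ∈ Ys X) (l : List (FreeGroup X))
    (hl : ∀ d ∈ l, d ∈ Ys X) {c : FreeGroup X} (hc : c ∈ Ys X) (hne : c ≠ y) :
    Inv y (Rr y (l ++ [c])) := by
  induction l with
  | nil => simpa using inv_base hy hc hne
  | cons a l ih =>
    have h1 : Rr y ((a :: l) ++ [c])
        = Rr y (l ++ [c]) - MonoidAlgebra.single y⁻¹ (1:ℤ) * Rr y (l ++ [c])
            * MonoidAlgebra.single a (1:ℤ) := by
      simp only [List.cons_append, Rr, List.append_eq]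
    rw [h1]
    exact step_inv hy (hl a (by simp)) (ih (fun d hd => hl d (by simp [hd])))

lemma inv_ne_zero {y : FreeGroup X} {W : MonoidAlgebra ℤ (FreeGroup X)} (h : Inv y W) :
    W ≠ 0 := by
  obtain ⟨g, hg, -⟩ := h
  intro h0
  rw [h0] at hg
  simp at hg

lemma left_cancel {y : FreeGroup X} (hy : y ∈ Ys X) {Q : MonoidAlgebra ℤ (FreeGroup X)}
    (h : (MonoidAlgebra.single y (1:ℤ) - 1) * Q = 0) : Q = 0 := by
  by_contra hQ
  have h2 : MonoidAlgebra.single y (1:ℤ) * Q = Q := by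
    have h3 : MonoidAlgebra.single y (1:ℤ) * Q - Q = 0 := by
      rw [← h, sub_mul, one_mul]
    rw [← sub_eq_zero]
    exact h3
  have h1 : ∀ t, Q.coeff (y⁻¹ * t) = Q.coeff t := by
    intro t
    calc Q.coeff (y⁻¹ * t) = (1:ℤ) * Q.coeff (y⁻¹ * t) := (one_mul _).symm
      _ = (MonoidAlgebra.single y (1:ℤ) * Q).coeff t := (MonoidAlgebra.coeff_single_mul_apply Q 1 y t).symm
      _ = Q.coeff t := by rw [h2]
  obtain ⟨t₀, ht₀⟩ := (Finsupp.support_nonempty_iff (f := Q.coeff)).mpr (by rwa [Ne, MonoidAlgebra.coeff_eq_zero])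
  have hall : ∀ n : ℕ, Q.coeff (y ^ (-(n:ℤ)) * t₀) ≠ 0 := by
    intro n
    induction n with
    | zero => simpa using Finsupp.mem_support_iff.mp ht₀
    | succ n ihn =>
      have hstep : y ^ (-((n:ℤ)+1)) * t₀ = y⁻¹ * (y ^ (-(n:ℤ)) * t₀) := by
        rw [show (-((n:ℤ)+1)) = (-1) + (-(n:ℤ)) by ring, zpow_add, zpow_neg_one, mul_assoc]
      rw [show (-(((n:ℕ)+1:ℕ):ℤ)) = -((n:ℤ)+1) by push_cast; ring, hstep, h1]
      exact ihn
  have hinj : Function.Injective (fun n : ℕ => y ^ (-(n:ℤ)) * t₀) := by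
    intro m n hmn
    have := congrArg ee hmn
    simp only [ee_mul, ee_zpow, ee_Ys hy] at this
    omega
  have hsubset : Set.range (fun n : ℕ => y ^ (-(n:ℤ)) * t₀) ⊆ ↑Q.coeff.support := by
    rintro _ ⟨n, rfl⟩
    exact Finsupp.mem_support_iff.mpr (hall n)
  exact (Set.infinite_range_of_injective hinj)
    (Set.Finite.subset (Q.coeff.support.finite_toSet) hsubset)

lemma nonempty_ne_one {z : FreeGroup X} (hz : z ∈ Ys X) (l : List (FreeGroup X))
    (hl : ∀ d ∈ l, d ∈ Ys X) : listProd (z :: l) ≠ 1 := by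
  intro heq
  have hT := congrArg (T z) heq
  have he : ∀ d ∈ z :: l, ee d = 1 := by
    intro d hd
    rcases List.mem_cons.mp hd with rfl | hd'
    · exact ee_Ys hz
    · exact ee_Ys (hl d hd')
  rw [T_one, bridge z _ he, List.reverse_cons, Rr_concat_self, smul_zero] at hT
  exact one_ne_zero (α := MonoidAlgebra ℤ (FreeGroup X)) hT.symm

lemma main_lists : ∀ (l₁ : List (FreeGroup X)) {l₂ : List (FreeGroup X)},
    (∀ d ∈ l₁, d ∈ Ys X) → (∀ d ∈ l₂, d ∈ Ys X) →
    listProd l₁ = listProd l₂ → l₁ = l₂ := by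
  intro l₁
  induction l₁ with
  | nil =>
    intro l₂ _ h₂ heq
    cases l₂ with
    | nil => rfl
    | cons z l₂' =>
      rw [listProd_nil] at heq
      exact absurd heq.symm
        (nonempty_ne_one (h₂ z (by simp)) l₂' (fun d hd => h₂ d (by simp [hd])))
  | cons a l₁' ih =>
    intro l₂ h₁ h₂ heq
    cases l₂ with
    | nil =>
      rw [listProd_nil] at heq
      exact absurd heq
        (nonempty_ne_one (h₁ a (by simp)) l₁' (fun d hd => h₁ d (by simp [hd])))
    | cons b l₂' =>
      have ha : a ∈ Ys X := h₁ a (by simp)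
      have hb : b ∈ Ys X := h₂ b (by simp)
      have hl₁' : ∀ d ∈ l₁', d ∈ Ys X := fun d hd => h₁ d (by simp [hd])
      have hl₂' : ∀ d ∈ l₂', d ∈ Ys X := fun d hd => h₂ d (by simp [hd])
      have hab : a = b := by
        by_contra hne
        have hT := congrArg (T a) heq
        rw [bridge a _ (fun d hd => ee_Ys (h₁ d hd)),
            bridge a _ (fun d hd => ee_Ys (h₂ d hd)),
            List.reverse_cons, List.reverse_cons, Rr_concat_self, smul_zero] at hT
        have hinv := inv_Rr ha l₂'.reverse
          (fun d hd => hl₂' d (List.mem_reverse.mp hd)) hb (fun h => hne h.symm)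
        have h0 : Rr a (l₂'.reverse ++ [b]) = 0 := by
          have h5 := congrArg (fun W => ((-1:ℤ) ^ ((b :: l₂').length)) • W) hT
          simp only [smul_zero, smul_smul, ← pow_add] at h5
          rw [Even.neg_one_pow ⟨(b :: l₂').length, rfl⟩, one_smul] at h5
          exact h5.symm
        exact inv_ne_zero hinv h0
      subst hab
      have hcan : (MonoidAlgebra.single a (1:ℤ) - 1) * (listProd l₁' - listProd l₂') = 0 := by
        rw [mul_sub, ← listProd_cons, ← listProd_cons, heq, sub_self]
      have hsub := left_cancel ha hcan
      rw [ih hl₁' hl₂' (sub_eq_zero.mp hsub)]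

theorem free_monoid_nu_injective' :
    Function.Injective
      (FreeMonoid.lift
        (fun y : {w : FreeGroup X // ∃ (γ : FreeGroup X) (x : X),
            w = γ * FreeGroup.of x * γ⁻¹} =>
          MonoidAlgebra.of ℤ (FreeGroup X) y.1 - 1)) := by
  intro w₁ w₂ h
  have hconv : ∀ w : FreeMonoid {w : FreeGroup X // ∃ (γ : FreeGroup X) (x : X),
      w = γ * FreeGroup.of x * γ⁻¹},
      FreeMonoid.lift (fun y : {w : FreeGroup X // ∃ (γ : FreeGroup X) (x : X),
            w = γ * FreeGroup.of x * γ⁻¹} =>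
          MonoidAlgebra.of ℤ (FreeGroup X) y.1 - 1) w
        = listProd ((FreeMonoid.toList w).map Subtype.val) := by
    intro w
    rw [FreeMonoid.lift_apply, listProd, List.map_map]
    congr 1
  rw [hconv w₁, hconv w₂] at h
  have hmem : ∀ (w : FreeMonoid {w : FreeGroup X // ∃ (γ : FreeGroup X) (x : X),
      w = γ * FreeGroup.of x * γ⁻¹}),
      ∀ d ∈ (FreeMonoid.toList w).map Subtype.val, d ∈ Ys X := by
    intro w d hd
    obtain ⟨y, _, rfl⟩ := List.mem_map.mp hd
    exact y.2
  have hlist := main_lists _ (hmem w₁) (hmem w₂) h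
  have := List.map_injective_iff.mpr Subtype.val_injective hlist
  exact FreeMonoid.toList.injective this

end FMNu

/-- Let `F(X)` be a free group, `Y` the set of conjugates of the generators, and
`ν : F⁺(Y) → ℤ[F(X)]` the monoid homomorphism with `ν(y) = y - 1`. Then `ν` is injective. -/
theorem free_monoid_nu_injective (X : Type*) :
    Function.Injective
      (FreeMonoid.lift
        (fun y : {w : FreeGroup X // ∃ (γ : FreeGroup X) (x : X),
            w = γ * FreeGroup.of x * γ⁻¹} =>
          MonoidAlgebra.of ℤ (FreeGroup X) y.1 - 1)) := by
  letI := Classical.decEq X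
  exact FMNu.free_monoid_nu_injective'
end

section
/- Let F(X) be a free group freely generated by a set X, let X₀ be a subset of X, and let ρ: F(X) → F(X) be a group automorphism which fixes every element of X₀ and which leaves the subgroup F(X∖X₀) generated by X∖X₀ invariant (i.e. ρ(F(X∖X₀)) ⊆ F(X∖X₀)). Let y_1,…,y_l ∈ {ωx₀ω^{−1} : ω ∈ F(X), x₀ ∈ X₀}. If ρ(y_1y_2⋯y_l) = y_1y_2⋯y_l, then ρ(y_i) = y_i for all i = 1,…,l. -/
namespace AFF

open FreeGroup SemidirectProduct

universe u
variable {B : Type u}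

theorem list_map_fix {α : Type*} {f : α → α} :
    ∀ {L : List α}, L.map f = L → ∀ a ∈ L, f a = a := by
  intro L
  induction L with
  | nil => intro _ a ha; simp at ha
  | cons c L ih =>
    intro h a ha
    rw [List.map_cons] at h
    injection h with h1 h2
    rcases List.mem_cons.1 ha with rfl | ha
    · exact h1
    · exact ih h2 a ha

theorem reduce_map {C : Type*} [DecidableEq B] [DecidableEq C] {g : B → C}
    (hg : Function.Injective g) :
    ∀ L : List (B × Bool),
      reduce (L.map fun c => (g c.1, c.2)) = (reduce L).map fun c => (g c.1, c.2) := by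
  intro L
  induction L with
  | nil => simp
  | cons c L ih =>
    rw [List.map_cons, reduce.cons, reduce.cons, ih]
    cases h : reduce L with
    | nil => simp
    | cons d t =>
      simp only [List.map_cons]
      by_cases hc : c.1 = d.1 ∧ c.2 = !d.2
      · rw [if_pos hc, if_pos ⟨congrArg g hc.1, hc.2⟩]
      · rw [if_neg hc, if_neg ?_, List.map_cons, List.map_cons]
        rintro ⟨h1, h2⟩
        exact hc ⟨hg h1, h2⟩

theorem toWord_map {C : Type*} [DecidableEq B] [DecidableEq C] {g : B → C}
    (hg : Function.Injective g) (v : FreeGroup B) :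
    (FreeGroup.map g v).toWord = v.toWord.map fun c => (g c.1, c.2) := by
  conv_lhs => rw [← mk_toWord (x := v)]
  rw [map.mk, toWord_mk, reduce_map hg, reduce_toWord]

theorem map_fix_letters [DecidableEq B] {g : B → B} (hg : Function.Injective g)
    {v : FreeGroup B} (h : FreeGroup.map g v = v) : ∀ c ∈ v.toWord, g c.1 = c.1 := by
  have h2 : (v.toWord.map fun c => (g c.1, c.2)) = v.toWord := by
    rw [← toWord_map hg, h]
  intro c hc
  exact congrArg Prod.fst (list_map_fix h2 c hc)

/-- The subgroup of elements all of whose letters lie in `T`. -/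
def lettersSubgroup [DecidableEq B] (T : Set B) : Subgroup (FreeGroup B) where
  carrier := {v | ∀ c ∈ v.toWord, c.1 ∈ T}
  one_mem' := by intro c hc; rw [toWord_one] at hc; simp at hc
  mul_mem' := by
    intro a b ha hb c hc
    have := (toWord_mul_sublist a b).subset hc
    rcases List.mem_append.1 this with h | h
    exacts [ha c h, hb c h]
  inv_mem' := by
    intro a ha c hc
    rw [toWord_inv] at hc
    unfold invRev at hc
    obtain ⟨d, hd, rfl⟩ := List.mem_map.1 (List.mem_reverse.1 hc)
    exact ha d hd

theorem letters_mem [DecidableEq B] {T : Set B} {v : FreeGroup B}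
    (hv : v ∈ Subgroup.closure (FreeGroup.of '' T)) : ∀ c ∈ v.toWord, c.1 ∈ T := by
  refine (Subgroup.closure_le (lettersSubgroup T)).2 ?_ hv
  rintro _ ⟨x, hx, rfl⟩ c hc
  rw [toWord_of] at hc
  rcases List.mem_singleton.1 hc with rfl
  exact hx

theorem mk_mem_closure (T : Set B) :
    ∀ L : List (B × Bool), (∀ c ∈ L, c.1 ∈ T) →
      FreeGroup.mk L ∈ Subgroup.closure (FreeGroup.of '' T) := by
  intro L
  induction L with
  | nil => intro _; rw [← one_eq_mk]; exact one_mem _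
  | cons c L ih =>
    intro h
    have hsplit : FreeGroup.mk (c :: L) = FreeGroup.mk [c] * FreeGroup.mk L := by
      rw [mul_mk]; rfl
    rw [hsplit]
    refine mul_mem ?_ (ih fun d hd => h d (List.mem_cons_of_mem _ hd))
    have hc : c.1 ∈ T := h c List.mem_cons_self
    obtain ⟨x, b⟩ := c
    cases b
    · have : FreeGroup.mk [(x, false)] = (FreeGroup.of x)⁻¹ := by
        rw [show FreeGroup.of x = FreeGroup.mk [(x, true)] from rfl, inv_mk]
        simp [invRev]
      rw [this]
      exact inv_mem (Subgroup.subset_closure ⟨x, hc, rfl⟩)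
    · exact Subgroup.subset_closure ⟨x, hc, rfl⟩

theorem mem_closure_of_letters [DecidableEq B] {T : Set B} {v : FreeGroup B}
    (h : ∀ c ∈ v.toWord, c.1 ∈ T) : v ∈ Subgroup.closure (FreeGroup.of '' T) := by
  rw [← mk_toWord (x := v)]
  exact mk_mem_closure T v.toWord h

/-- The action of `F(B)` on `F(S × F(B))` by left translation on the second index. -/
def act (S : Set B) : FreeGroup B →* MulAut (FreeGroup (↥S × FreeGroup B)) where
  toFun h := FreeGroup.freeGroupCongr (Equiv.prodCongr (Equiv.refl ↥S) (Equiv.mulLeft h))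
  map_one' := by
    refine MulEquiv.ext fun x => ?_
    show FreeGroup.map _ x = x
    have he : (⇑(Equiv.prodCongr (Equiv.refl ↥S) (Equiv.mulLeft (1 : FreeGroup B)))) =
        fun z => z := by
      funext p; simp
    rw [he]
    exact map.id' x
  map_mul' h₁ h₂ := by
    refine MulEquiv.ext fun x => ?_
    show FreeGroup.map _ x = FreeGroup.map _ (FreeGroup.map _ x)
    rw [map.comp]
    rw [show (⇑((Equiv.refl ↥S).prodCongr (Equiv.mulLeft (h₁ * h₂)))) =
      (⇑((Equiv.refl ↥S).prodCongr (Equiv.mulLeft h₁)) ∘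
        ⇑((Equiv.refl ↥S).prodCongr (Equiv.mulLeft h₂))) from
      funext fun p => by simp [Prod.map, mul_assoc]]

theorem act_of (S : Set B) (g : FreeGroup B) (p : ↥S × FreeGroup B) :
    act S g (FreeGroup.of p) = FreeGroup.of (p.1, g * p.2) := by
  show FreeGroup.map _ (FreeGroup.of p) = _
  rw [map.of]
  rfl

theorem norm_map_le {C : Type*} [DecidableEq B] [DecidableEq C] (g : B → C) (x : FreeGroup B) :
    norm (FreeGroup.map g x) ≤ norm x := by
  conv_lhs => rw [← mk_toWord (x := x)]
  rw [map.mk]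
  calc norm (FreeGroup.mk _) ≤ (x.toWord.map fun c => (g c.1, c.2)).length := norm_mk_le
  _ = x.toWord.length := List.length_map _
  _ = norm x := rfl

theorem norm_act (S : Set B) [DecidableEq (↥S × FreeGroup B)] (g : FreeGroup B)
    (m : FreeGroup (↥S × FreeGroup B)) :
    norm (act S g m) = norm m := by
  refine le_antisymm (norm_map_le _ m) ?_
  have h2 : m = FreeGroup.map (⇑(Equiv.prodCongr (Equiv.refl ↥S) (Equiv.mulLeft g)).symm)
      (act S g m) := by
    show m = FreeGroup.map _ (FreeGroup.map _ m)
    rw [map.comp]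
    have : (⇑(Equiv.prodCongr (Equiv.refl ↥S) (Equiv.mulLeft g)).symm ∘
        ⇑(Equiv.prodCongr (Equiv.refl ↥S) (Equiv.mulLeft g))) = fun z => z := by
      funext p; simp [Prod.map, inv_mul_cancel_left]
    rw [this, map.id']
  conv_lhs => rw [h2]
  exact norm_map_le _ _

/-- The rewriting homomorphism into the semidirect product. -/
def Phi (S : Set B) [DecidablePred (· ∈ S)] :
    FreeGroup B →* FreeGroup (↥S × FreeGroup B) ⋊[act S] FreeGroup B :=
  FreeGroup.lift fun x =>
    if h : x ∈ S then inl (FreeGroup.of ((⟨x, h⟩ : ↥S), (1 : FreeGroup B))) else inr (FreeGroup.of x)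

theorem Phi_of_mem (S : Set B) [DecidablePred (· ∈ S)] {x : B} (h : x ∈ S) :
    Phi S (FreeGroup.of x) = inl (FreeGroup.of ((⟨x, h⟩ : ↥S), (1 : FreeGroup B))) := by
  rw [Phi, FreeGroup.lift_apply_of, dif_pos h]

theorem Phi_of_not_mem (S : Set B) [DecidablePred (· ∈ S)] {x : B} (h : x ∉ S) :
    Phi S (FreeGroup.of x) = inr (FreeGroup.of x) := by
  rw [Phi, FreeGroup.lift_apply_of, dif_neg h]

/-- The retraction. -/
def Psi0 (S : Set B) : FreeGroup (↥S × FreeGroup B) →* FreeGroup B :=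
  FreeGroup.lift fun p => p.2 * FreeGroup.of p.1.1 * p.2⁻¹

def Psi (S : Set B) :
    (FreeGroup (↥S × FreeGroup B) ⋊[act S] FreeGroup B) →* FreeGroup B :=
  SemidirectProduct.lift (Psi0 S) (MonoidHom.id _) (by
    intro g
    refine FreeGroup.ext_hom _ _ fun p => ?_
    simp only [MonoidHom.comp_apply, MulEquiv.coe_toMonoidHom]
    rw [show (act S g : MulAut (FreeGroup (↥S × FreeGroup B))) (FreeGroup.of p) =
      FreeGroup.of (p.1, g * p.2) from act_of S g p]
    simp only [Psi0, FreeGroup.lift_apply_of, MulAut.conj_apply, MonoidHom.id_apply, mul_inv_rev]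
    try group)

theorem Psi_Phi (S : Set B) [DecidablePred (· ∈ S)] (v : FreeGroup B) : Psi S (Phi S v) = v := by
  have : (Psi S).comp (Phi S) = MonoidHom.id _ := by
    refine FreeGroup.ext_hom _ _ fun x => ?_
    by_cases h : x ∈ S
    · simp only [MonoidHom.comp_apply, MonoidHom.id_apply, Phi_of_mem S h, Psi, lift_inl]
      rw [Psi0, FreeGroup.lift_apply_of]
      simp
    · simp only [MonoidHom.comp_apply, MonoidHom.id_apply, Phi_of_not_mem S h, Psi, lift_inr]
  exact DFunLike.congr_fun this v

theorem sd_conj {N G : Type*} [Group N] [Group G] {φ : G →* MulAut N}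
    (a : N ⋊[φ] G) (m : N) :
    a * inl m * a⁻¹ = inl (a.left * φ a.right m * a.left⁻¹) := by
  ext
  · simp only [mul_left, mul_right, inv_left, inv_right, left_inl, right_inl, mul_one,
      _root_.map_inv, MulAut.apply_inv_self]
  · simp [mul_right, inv_right]

theorem Phi_conj (S : Set B) [DecidablePred (· ∈ S)] (ω : FreeGroup B) {x : B} (hx : x ∈ S) :
    Phi S (ω * FreeGroup.of x * ω⁻¹) =
      inl ((Phi S ω).left *
        FreeGroup.of ((⟨x, hx⟩ : ↥S), (Phi S ω).right) * ((Phi S ω).left)⁻¹) := by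
  rw [_root_.map_mul, _root_.map_mul, _root_.map_inv, Phi_of_mem S hx, sd_conj, act_of]
  simp [mul_one]

theorem norm_Phi_left_le (S : Set B) [DecidableEq B] [DecidableEq (↥S × FreeGroup B)]
    [DecidablePred (· ∈ S)] :
    ∀ L : List (B × Bool),
      norm ((Phi S (FreeGroup.mk L)).left) ≤ L.countP fun c => decide (c.1 ∈ S) := by
  intro L
  induction L with
  | nil =>
    rw [← one_eq_mk, _root_.map_one]
    simp [FreeGroup.norm_one, one_left]
  | cons c L ih =>
    have hsplit : FreeGroup.mk (c :: L) = FreeGroup.mk [c] * FreeGroup.mk L := by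
      rw [mul_mk]; rfl
    rw [hsplit, _root_.map_mul, mul_left]
    refine le_trans (norm_mul_le _ _) ?_
    rw [norm_act]
    rw [List.countP_cons]
    have hone : norm ((Phi S (FreeGroup.mk [c])).left) ≤ if c.1 ∈ S then 1 else 0 := by
      obtain ⟨x, b⟩ := c
      cases b
      · have : FreeGroup.mk [(x, false)] = (FreeGroup.of x)⁻¹ := by
          rw [show FreeGroup.of x = FreeGroup.mk [(x, true)] from rfl, inv_mk]
          simp [invRev]
        rw [this, _root_.map_inv]
        by_cases h : x ∈ S
        · rw [Phi_of_mem S h, ← _root_.map_inv, left_inl, if_pos h, norm_inv_eq]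
          simp [FreeGroup.norm, toWord_of]
        · rw [Phi_of_not_mem S h, ← _root_.map_inv, left_inr]
          simp [FreeGroup.norm_one]
      · by_cases h : x ∈ S
        · rw [show FreeGroup.mk [(x, true)] = FreeGroup.of x from rfl, Phi_of_mem S h,
            left_inl, if_pos h]
          simp [FreeGroup.norm, toWord_of]
        · rw [show FreeGroup.mk [(x, true)] = FreeGroup.of x from rfl, Phi_of_not_mem S h,
            left_inr]
          simp [FreeGroup.norm_one]
    simp only [decide_eq_true_eq]
    have := Nat.add_le_add hone ih
    omega

theorem MCL : ∀ (n : ℕ) {B : Type u} [DecidableEq B] (S : Set B) [DecidablePred (· ∈ S)]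
    [DecidableEq (↥S × FreeGroup B)] (l : ℕ) (ω : Fin l → FreeGroup B) (b : Fin l → B),
    (∑ s, norm (ω s * FreeGroup.of (b s) * (ω s)⁻¹)) ≤ n →
    (List.ofFn fun s => ω s * FreeGroup.of (b s) * (ω s)⁻¹).prod ∈
      Subgroup.closure (FreeGroup.of '' S) →
    ∀ t, ω t * FreeGroup.of (b t) * (ω t)⁻¹ ∈ Subgroup.closure (FreeGroup.of '' S) := by
  intro n
  induction n using Nat.strong_induction_on with
  | _ n ih =>
  intro B _ S _ _ l ω b hn hz t
  set y : Fin l → FreeGroup B := fun s => ω s * FreeGroup.of (b s) * (ω s)⁻¹ with hy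
  by_cases hall : ∀ s, y s ∈ Subgroup.closure (FreeGroup.of '' S)
  · exact hall t
  push_neg at hall
  obtain ⟨t₀, ht₀⟩ := hall
  -- Step 1: every `b s` lies in `S`.
  have hbS : ∀ s, b s ∈ S := by
    intro s
    by_contra hbs
    set e : FreeGroup B →* Multiplicative ℤ :=
      FreeGroup.lift fun x => if x = b s then Multiplicative.ofAdd (1 : ℤ) else 1 with he
    have h1 : e ((List.ofFn y).prod) = 1 := by
      have hker : Subgroup.closure (FreeGroup.of '' S) ≤ e.ker := by
        rw [Subgroup.closure_le]
        rintro _ ⟨x, hx, rfl⟩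
        have hxne : x ≠ b s := fun hxb => hbs (hxb ▸ hx)
        simp [he, FreeGroup.lift_apply_of, hxne, MonoidHom.mem_ker]
      exact hker hz
    have habc : ∀ a c : Multiplicative ℤ, a * c * a⁻¹ = c := fun a c => by
      rw [mul_comm a c, mul_inv_cancel_right]
    have h2 : e ((List.ofFn y).prod) =
        Multiplicative.ofAdd (1 : ℤ) ^ (Finset.univ.filter fun s' => b s' = b s).card := by
      rw [map_list_prod, List.map_ofFn, List.prod_ofFn]
      have hterm : ∀ s', e (y s') = if b s' = b s then Multiplicative.ofAdd (1 : ℤ) else 1 := by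
        intro s'
        show e (ω s' * FreeGroup.of (b s') * (ω s')⁻¹) = _
        rw [_root_.map_mul, _root_.map_mul, _root_.map_inv, habc, he]
        exact FreeGroup.lift_apply_of
      simp only [Function.comp_apply]
      rw [Finset.prod_congr rfl fun s' _ => hterm s', ← Finset.prod_filter, Finset.prod_const]
    rw [h2] at h1
    have h3 := congrArg Multiplicative.toAdd h1
    rw [toAdd_pow] at h3
    simp only [toAdd_ofAdd, one_mul, toAdd_one] at h3
    have hcard : (Finset.univ.filter fun s' => b s' = b s).card = 0 := by
      have := h3
      rw [nsmul_eq_mul, mul_one] at this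
      exact_mod_cast this
    have hs : s ∈ Finset.univ.filter fun s' => b s' = b s := by simp
    rw [Finset.card_eq_zero] at hcard
    rw [hcard] at hs
    exact absurd hs (Finset.notMem_empty s)
  -- Step 2: rewrite in the semidirect product.
  set g : Fin l → FreeGroup (↥S × FreeGroup B) := fun s => (Phi S (ω s)).left with hgdef
  set q : Fin l → ↥S × FreeGroup B :=
    fun s => ((⟨b s, hbS s⟩ : ↥S), (Phi S (ω s)).right) with hqdef
  set γ : Fin l → FreeGroup (↥S × FreeGroup B) :=
    fun s => g s * FreeGroup.of (q s) * (g s)⁻¹ with hγdef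
  have hPhiy : ∀ s, Phi S (y s) = inl (γ s) := fun s => Phi_conj S (ω s) (hbS s)
  have hPhiz : Phi S ((List.ofFn y).prod) = inl ((List.ofFn γ).prod) := by
    rw [map_list_prod, List.map_ofFn, show ((Phi S) ∘ y) = (inl ∘ γ) from funext hPhiy,
      ← List.map_ofFn, ← map_list_prod]
  set S₁ : Set (↥S × FreeGroup B) := {p | p.2 = 1} with hS₁
  have hZ : (List.ofFn γ).prod ∈ Subgroup.closure (FreeGroup.of '' S₁) := by
    have h6 : Phi S ((List.ofFn y).prod) ∈
        Subgroup.map inl (Subgroup.closure (FreeGroup.of '' S₁)) := by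
      have h7 : Phi S ((List.ofFn y).prod) ∈
          (Subgroup.closure (FreeGroup.of '' S)).map (Phi S) :=
        Subgroup.mem_map_of_mem _ hz
      rw [MonoidHom.map_closure] at h7
      refine (Subgroup.closure_le _).2 ?_ h7
      rintro _ ⟨_, ⟨x, hx, rfl⟩, rfl⟩
      rw [Phi_of_mem S hx]
      exact ⟨FreeGroup.of ((⟨x, hx⟩ : ↥S), 1),
        Subgroup.subset_closure ⟨((⟨x, hx⟩ : ↥S), 1), rfl, rfl⟩, rfl⟩
    obtain ⟨m, hm, hminl⟩ := h6
    rwa [show m = (List.ofFn γ).prod from inl_injective (hminl.trans hPhiz)] at hm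
  -- Step 3: norms.
  have hnle : ∀ s, norm (γ s) ≤ norm (y s) := by
    intro s
    have h8 : γ s = (Phi S (y s)).left := by rw [hPhiy s, left_inl]
    rw [h8]
    calc norm ((Phi S (y s)).left)
        = norm ((Phi S (FreeGroup.mk (y s).toWord)).left) := by rw [mk_toWord]
      _ ≤ (y s).toWord.countP (fun c => decide (c.1 ∈ S)) := norm_Phi_left_le S _
      _ ≤ (y s).toWord.length := List.countP_le_length
      _ = norm (y s) := rfl
  have hnlt : norm (γ t₀) < norm (y t₀) := by
    have h8 : γ t₀ = (Phi S (y t₀)).left := by rw [hPhiy t₀, left_inl]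
    have hcount : (y t₀).toWord.countP (fun c => decide (c.1 ∈ S)) <
        (y t₀).toWord.length := by
      have hle : (y t₀).toWord.countP (fun c => decide (c.1 ∈ S)) ≤
          (y t₀).toWord.length := List.countP_le_length
      rcases hle.lt_or_eq with h | h
      · exact h
      · exfalso
        rw [List.countP_eq_length] at h
        exact ht₀ (mem_closure_of_letters fun c hc => by simpa using h c hc)
    calc norm (γ t₀)
        = norm ((Phi S (FreeGroup.mk (y t₀).toWord)).left) := by rw [h8, mk_toWord]
      _ ≤ (y t₀).toWord.countP (fun c => decide (c.1 ∈ S)) := norm_Phi_left_le S _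
      _ < (y t₀).toWord.length := hcount
      _ = norm (y t₀) := rfl
  have hsum : (∑ s, norm (γ s)) < n := by
    have h9 : (∑ s, norm (γ s)) < ∑ s, norm (y s) :=
      Finset.sum_lt_sum (fun s _ => hnle s) ⟨t₀, Finset.mem_univ _, hnlt⟩
    exact lt_of_lt_of_le h9 hn
  -- Step 4: recursion.
  letI : DecidableEq (↥S × FreeGroup B) := inferInstance
  letI : DecidablePred (· ∈ S₁) := Classical.decPred _
  letI : DecidableEq (↥S₁ × FreeGroup (↥S × FreeGroup B)) := Classical.decEq _
  have hγcl : ∀ s, γ s ∈ Subgroup.closure (FreeGroup.of '' S₁) :=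
    ih _ hsum S₁ l g q (le_refl _) hZ
  -- Step 5: pull back.
  have h10 : y t = Psi S (Phi S (y t)) := (Psi_Phi S (y t)).symm
  rw [show (ω t * FreeGroup.of (b t) * (ω t)⁻¹ : FreeGroup B) = y t from rfl, h10, hPhiy t,
    Psi, lift_inl]
  have h11 : Psi0 S (γ t) ∈ Subgroup.map (Psi0 S) (Subgroup.closure (FreeGroup.of '' S₁)) :=
    Subgroup.mem_map_of_mem _ (hγcl t)
  rw [MonoidHom.map_closure] at h11
  refine (Subgroup.closure_le _).2 ?_ h11
  rintro _ ⟨_, ⟨p, hp, rfl⟩, rfl⟩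
  have h12 : Psi0 S (FreeGroup.of p) = FreeGroup.of p.1.1 := by
    rw [Psi0, FreeGroup.lift_apply_of, show p.2 = 1 from hp]
    simp
  rw [h12]
  exact Subgroup.subset_closure ⟨p.1.1, p.1.2, rfl⟩

end AFF

/-- Let `ρ` be an automorphism of the free group `F(X)` fixing every element of `X₀ ⊆ X`
and leaving `F(X ∖ X₀)` invariant. If `y_1, …, y_l` are conjugates of elements of `X₀` and
`ρ(y_1 ⋯ y_l) = y_1 ⋯ y_l`, then `ρ(y_i) = y_i` for all `i`. -/
theorem auto_fixes_factors {X : Type*} (X₀ : Set X) (ρ : FreeGroup X ≃* FreeGroup X)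
    (hfix : ∀ x ∈ X₀, ρ (FreeGroup.of x) = FreeGroup.of x)
    (hinv : ∀ w ∈ Subgroup.closure (FreeGroup.of '' X₀ᶜ),
      ρ w ∈ Subgroup.closure (FreeGroup.of '' X₀ᶜ))
    (l : ℕ) (y : Fin l → FreeGroup X)
    (hy : ∀ t, ∃ (ω : FreeGroup X) (x₀ : X), x₀ ∈ X₀ ∧ y t = ω * FreeGroup.of x₀ * ω⁻¹)
    (hprod : ρ ((List.ofFn y).prod) = (List.ofFn y).prod) :
    ∀ t, ρ (y t) = y t := by
  classical
  choose ω x₀ hmem hyeq using hy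
  set z := (List.ofFn y).prod with hzdef
  set π : FreeGroup X →* FreeGroup X :=
    SemidirectProduct.rightHom.comp (AFF.Phi X₀) with hπdef
  have hπof_mem : ∀ x ∈ X₀, π (FreeGroup.of x) = 1 := by
    intro x hx
    rw [hπdef, MonoidHom.comp_apply, AFF.Phi_of_mem X₀ hx, SemidirectProduct.rightHom_inl]
  have hπof_not : ∀ x ∉ X₀, π (FreeGroup.of x) = FreeGroup.of x := by
    intro x hx
    rw [hπdef, MonoidHom.comp_apply, AFF.Phi_of_not_mem X₀ hx, SemidirectProduct.rightHom_inr]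
  have hπcl : ∀ w ∈ Subgroup.closure (FreeGroup.of '' X₀ᶜ), π w = w := by
    intro w hw
    refine MonoidHom.eqOn_closure (f := π) (g := MonoidHom.id _) ?_ hw
    rintro _ ⟨x, hx, rfl⟩
    exact hπof_not x hx
  have hrange : ∀ v, π v ∈ Subgroup.closure (FreeGroup.of '' X₀ᶜ) := by
    intro v
    induction v using FreeGroup.induction_on with
    | C1 => rw [_root_.map_one]; exact one_mem _
    | of x =>
      by_cases hx : x ∈ X₀
      · rw [hπof_mem x hx]
        exact one_mem _
      · rw [hπof_not x hx]
        exact Subgroup.subset_closure ⟨x, hx, rfl⟩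
    | inv_of x ihx => rw [_root_.map_inv]; exact inv_mem ihx
    | mul a b iha ihb => rw [_root_.map_mul]; exact mul_mem iha ihb
  have hππ : ∀ v, π (π v) = π v := fun v => hπcl _ (hrange v)
  set ρb : FreeGroup X →* FreeGroup X := π.comp ρ.toMonoidHom with hρbdef
  set f : ↥X₀ × FreeGroup X → ↥X₀ × FreeGroup X := fun p => (p.1, ρb p.2) with hfdef
  set φhat := SemidirectProduct.lift
      ((SemidirectProduct.inl (φ := AFF.act X₀)).comp (FreeGroup.map f))
      ((SemidirectProduct.inr (φ := AFF.act X₀)).comp ρb) (by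
    intro g
    refine FreeGroup.ext_hom _ _ fun p => ?_
    simp only [MonoidHom.comp_apply, MulEquiv.coe_toMonoidHom]
    rw [show (AFF.act X₀ g) (FreeGroup.of p) = FreeGroup.of (p.1, g * p.2) from
      AFF.act_of X₀ g p, FreeGroup.map.of, FreeGroup.map.of]
    rw [MulAut.conj_apply,
      show (SemidirectProduct.inr (φ := AFF.act X₀) (ρb g))⁻¹ =
        SemidirectProduct.inr (ρb g)⁻¹ from (_root_.map_inv _ _).symm,
      ← SemidirectProduct.inl_aut, AFF.act_of]
    try (show SemidirectProduct.inl (FreeGroup.of (p.1, ρb (g * p.2))) = _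
         rw [_root_.map_mul])) with hφhatdef
  have hkey : ∀ v, AFF.Phi X₀ (ρ v) = φhat (AFF.Phi X₀ v) := by
    have hΦcl : ∀ w ∈ Subgroup.closure (FreeGroup.of '' X₀ᶜ),
        AFF.Phi X₀ w = SemidirectProduct.inr (π w) := by
      intro w hw
      refine MonoidHom.eqOn_closure
        (f := AFF.Phi X₀) (g := (SemidirectProduct.inr (φ := AFF.act X₀)).comp π) ?_ hw
      rintro _ ⟨x, hx, rfl⟩
      show AFF.Phi X₀ (FreeGroup.of x) = SemidirectProduct.inr (π (FreeGroup.of x))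
      rw [AFF.Phi_of_not_mem X₀ hx, hπof_not x hx]
    have hcomp : (AFF.Phi X₀).comp ρ.toMonoidHom = φhat.comp (AFF.Phi X₀) := by
      refine FreeGroup.ext_hom _ _ fun x => ?_
      simp only [MonoidHom.comp_apply, MulEquiv.coe_toMonoidHom]
      by_cases hx : x ∈ X₀
      · rw [hfix x hx, AFF.Phi_of_mem X₀ hx, hφhatdef, SemidirectProduct.lift_inl,
          MonoidHom.comp_apply, FreeGroup.map.of]
        rw [show f ((⟨x, hx⟩ : ↥X₀), (1 : FreeGroup X)) = ((⟨x, hx⟩ : ↥X₀), (1 : FreeGroup X))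
          from by rw [hfdef]; simp only []; rw [_root_.map_one]]
      · rw [AFF.Phi_of_not_mem X₀ hx, hφhatdef, SemidirectProduct.lift_inr,
          MonoidHom.comp_apply]
        rw [hΦcl _ (hinv _ (Subgroup.subset_closure ⟨x, hx, rfl⟩))]
        rfl
    exact fun v => DFunLike.congr_fun hcomp v
  -- the conjugating data in the free group on ↥X₀ × FreeGroup X
  set g : Fin l → FreeGroup (↥X₀ × FreeGroup X) := fun t => (AFF.Phi X₀ (ω t)).left with hgdef
  set q : Fin l → ↥X₀ × FreeGroup X :=
    fun t => ((⟨x₀ t, hmem t⟩ : ↥X₀), (AFF.Phi X₀ (ω t)).right) with hqdef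
  set γ : Fin l → FreeGroup (↥X₀ × FreeGroup X) :=
    fun t => g t * FreeGroup.of (q t) * (g t)⁻¹ with hγdef
  have hΦy : ∀ t, AFF.Phi X₀ (y t) = SemidirectProduct.inl (γ t) := by
    intro t
    rw [hyeq t]
    exact AFF.Phi_conj X₀ (ω t) (hmem t)
  set Zγ := (List.ofFn γ).prod with hZγdef
  have hΦz : AFF.Phi X₀ z = SemidirectProduct.inl Zγ := by
    rw [hzdef, map_list_prod, List.map_ofFn,
      show ((AFF.Phi X₀) ∘ y) = (SemidirectProduct.inl ∘ γ) from funext hΦy,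
      ← List.map_ofFn, ← map_list_prod]
  have hψZ : FreeGroup.map f Zγ = Zγ := by
    have h1 : AFF.Phi X₀ (ρ z) = SemidirectProduct.inl (FreeGroup.map f Zγ) := by
      rw [hkey z, hΦz, hφhatdef, SemidirectProduct.lift_inl]
      rfl
    have h2 : AFF.Phi X₀ (ρ z) = SemidirectProduct.inl Zγ := by rw [hprod]; exact hΦz
    exact SemidirectProduct.inl_injective (h1.symm.trans h2)
  set Y₀ : Set (↥X₀ × FreeGroup X) := {p | π p.2 = p.2} with hY₀def
  have hactY : ∀ gg : FreeGroup X, π gg = gg →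
      ∀ m ∈ Subgroup.closure (FreeGroup.of '' Y₀),
        AFF.act X₀ gg m ∈ Subgroup.closure (FreeGroup.of '' Y₀) := by
    intro gg hgg m hm
    have h := Subgroup.mem_map_of_mem ((AFF.act X₀ gg).toMonoidHom) hm
    rw [MonoidHom.map_closure] at h
    refine (Subgroup.closure_le _).2 ?_ h
    rintro _ ⟨_, ⟨p, hp, rfl⟩, rfl⟩
    show (AFF.act X₀ gg) (FreeGroup.of p) ∈ _
    rw [AFF.act_of]
    refine Subgroup.subset_closure ⟨(p.1, gg * p.2), ?_, rfl⟩
    show π (gg * p.2) = gg * p.2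
    rw [_root_.map_mul, hgg, hp]
  set CC : Subgroup (FreeGroup (↥X₀ × FreeGroup X) ⋊[AFF.act X₀] FreeGroup X) :=
    { carrier := {a | a.left ∈ Subgroup.closure (FreeGroup.of '' Y₀) ∧ π a.right = a.right}
      one_mem' := ⟨by rw [SemidirectProduct.one_left]; exact one_mem _, by
        rw [SemidirectProduct.one_right, _root_.map_one]⟩
      mul_mem' := by
        rintro a b ⟨ha1, ha2⟩ ⟨hb1, hb2⟩
        constructor
        · rw [SemidirectProduct.mul_left]
          exact mul_mem ha1 (hactY a.right ha2 _ hb1)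
        · rw [SemidirectProduct.mul_right, _root_.map_mul, ha2, hb2]
      inv_mem' := by
        rintro a ⟨ha1, ha2⟩
        constructor
        · rw [SemidirectProduct.inv_left]
          exact hactY a.right⁻¹ (by rw [_root_.map_inv, ha2]) _ (inv_mem ha1)
        · rw [SemidirectProduct.inv_right, _root_.map_inv, ha2] } with hCCdef
  have hCC : ∀ v, AFF.Phi X₀ v ∈ CC := by
    intro v
    induction v using FreeGroup.induction_on with
    | C1 => rw [_root_.map_one]; exact one_mem _
    | of x =>
      by_cases hx : x ∈ X₀
      · rw [AFF.Phi_of_mem X₀ hx]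
        refine ⟨?_, ?_⟩
        · rw [SemidirectProduct.left_inl]
          exact Subgroup.subset_closure ⟨((⟨x, hx⟩ : ↥X₀), 1),
            show π (1 : FreeGroup X) = 1 from _root_.map_one _, rfl⟩
        · rw [SemidirectProduct.right_inl, _root_.map_one]
      · rw [AFF.Phi_of_not_mem X₀ hx]
        refine ⟨?_, ?_⟩
        · rw [SemidirectProduct.left_inr]; exact one_mem _
        · rw [SemidirectProduct.right_inr]; exact hπof_not x hx
    | inv_of x ihx => rw [_root_.map_inv]; exact inv_mem ihx
    | mul a b iha ihb => rw [_root_.map_mul]; exact mul_mem iha ihb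
  have hZY₀ : Zγ ∈ Subgroup.closure (FreeGroup.of '' Y₀) := by
    have h := (hCC z).1
    rwa [hΦz, SemidirectProduct.left_inl] at h
  have hγY₀ : ∀ t, γ t ∈ Subgroup.closure (FreeGroup.of '' Y₀) := by
    intro t
    have h := (hCC (y t)).1
    rwa [hΦy t, SemidirectProduct.left_inl] at h
  have hρY₀ : ∀ p : ↥X₀ × FreeGroup X, p ∈ Y₀ → ρb p.2 = ρ p.2 := by
    intro p hp
    have h1 : p.2 ∈ Subgroup.closure (FreeGroup.of '' X₀ᶜ) := by
      have : π p.2 = p.2 := hp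
      rw [← this]; exact hrange p.2
    exact hπcl _ (hinv _ h1)
  have hfY₀ : ∀ p : ↥X₀ × FreeGroup X, p ∈ Y₀ → f p ∈ Y₀ := by
    intro p _
    show π (ρb p.2) = ρb p.2
    exact hππ _
  set f' : ↥X₀ × FreeGroup X → ↥X₀ × FreeGroup X :=
    fun p => if p ∈ Y₀ then f p else p with hf'def
  have hf'Y₀ : ∀ p ∈ Y₀, f' p = f p := by
    intro p hp
    simp only [hf'def]
    exact if_pos hp
  have hf'not : ∀ p ∉ Y₀, f' p = p := by
    intro p hp
    simp only [hf'def]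
    exact if_neg hp
  have hf'inj : Function.Injective f' := by
    intro p p' h
    by_cases hp : p ∈ Y₀ <;> by_cases hp' : p' ∈ Y₀
    · rw [hf'Y₀ p hp, hf'Y₀ p' hp'] at h
      rw [Prod.ext_iff] at h
      obtain ⟨h1, h2⟩ := h
      have h1' : p.1 = p'.1 := h1
      have h2' : ρb p.2 = ρb p'.2 := h2
      rw [hρY₀ p hp, hρY₀ p' hp'] at h2'
      exact Prod.ext h1' (ρ.injective h2')
    · exfalso
      rw [hf'Y₀ p hp, hf'not p' hp'] at h
      exact hp' (h ▸ hfY₀ p hp)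
    · exfalso
      rw [hf'not p hp, hf'Y₀ p' hp'] at h
      exact hp (h.symm ▸ hfY₀ p' hp')
    · rwa [hf'not p hp, hf'not p' hp'] at h
  have hmapZ : FreeGroup.map f' Zγ = Zγ := by
    have hagree : ∀ v ∈ Subgroup.closure (FreeGroup.of '' Y₀),
        FreeGroup.map f' v = FreeGroup.map f v := by
      intro v hv
      refine MonoidHom.eqOn_closure (f := FreeGroup.map f') (g := FreeGroup.map f) ?_ hv
      rintro _ ⟨p, hp, rfl⟩
      show FreeGroup.map f' (FreeGroup.of p) = FreeGroup.map f (FreeGroup.of p)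
      rw [FreeGroup.map.of, FreeGroup.map.of, hf'Y₀ p hp]
    rw [hagree Zγ hZY₀, hψZ]
  have hlet : ∀ c ∈ Zγ.toWord, f' c.1 = c.1 := AFF.map_fix_letters hf'inj hmapZ
  set Sfix : Set (↥X₀ × FreeGroup X) := {p | f' p = p} with hSfixdef
  have hZS : Zγ ∈ Subgroup.closure (FreeGroup.of '' Sfix) :=
    AFF.mem_closure_of_letters fun c hc => hlet c hc
  have hγS : ∀ t, γ t ∈ Subgroup.closure (FreeGroup.of '' Sfix) :=
    AFF.MCL (∑ t, FreeGroup.norm (g t * FreeGroup.of (q t) * (g t)⁻¹)) Sfix l g q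
      (le_refl _) hZS
  have hfixS : ∀ v ∈ Subgroup.closure (FreeGroup.of '' Sfix), FreeGroup.map f' v = v := by
    intro v hv
    refine MonoidHom.eqOn_closure (f := FreeGroup.map f') (g := MonoidHom.id _) ?_ hv
    rintro _ ⟨p, hp, rfl⟩
    show FreeGroup.map f' (FreeGroup.of p) = FreeGroup.of p
    rw [FreeGroup.map.of, show f' p = p from hp]
  have hψγ : ∀ t, FreeGroup.map f (γ t) = γ t := by
    intro t
    have hagree : ∀ v ∈ Subgroup.closure (FreeGroup.of '' Y₀),
        FreeGroup.map f' v = FreeGroup.map f v := by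
      intro v hv
      refine MonoidHom.eqOn_closure (f := FreeGroup.map f') (g := FreeGroup.map f) ?_ hv
      rintro _ ⟨p, hp, rfl⟩
      show FreeGroup.map f' (FreeGroup.of p) = FreeGroup.map f (FreeGroup.of p)
      rw [FreeGroup.map.of, FreeGroup.map.of, hf'Y₀ p hp]
    rw [← hagree _ (hγY₀ t), hfixS _ (hγS t)]
  intro t
  have h1 : AFF.Phi X₀ (ρ (y t)) = AFF.Phi X₀ (y t) := by
    rw [hkey (y t), hΦy t, hφhatdef, SemidirectProduct.lift_inl]
    show SemidirectProduct.inl (FreeGroup.map f (γ t)) = _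
    rw [hψγ t, ← hΦy t]
  calc ρ (y t) = AFF.Psi X₀ (AFF.Phi X₀ (ρ (y t))) := (AFF.Psi_Phi _ _).symm
    _ = AFF.Psi X₀ (AFF.Phi X₀ (y t)) := by rw [h1]
    _ = y t := AFF.Psi_Phi _ _
end
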